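/- arXiv:2202.07109 — 2 statements merged into one kernel-verified Lean document; each statement's English description precedes it below -/
import Mathlib

section
/- Assume (A1), (A2) and (A3) and fix i ∈ {1,2} and s > 0. Then there exist positive numbers c₅(s) and c₆(s), independent of the choice of antichain, such that for every finite maximal antichain Γ_i in H_i* (or, for i = 1, in H₁*(j) for some j ∈ Ψ; for i = 2, in H₂*(j⁺) for some j ∈ Ψ), writing l(Γ_i) = min_{σ∈Γ_i}|σ| and L(Γ_i) = max_{σ∈Γ_i}|σ|: if s ≤ s_{i,r} then c₅(s)·ρ_i(s)^{l(Γ_i)} ≤ Σ_{σ∈Γ_i}(p_σ s_σ^r)^{s/(s+r)} ≤ c₆(s)·ρ_i(s)^{L(Γ_i)}, and if s > s_{i,r} then c₅(s)·ρ_i(s)^{L(Γ_i)} ≤ Σ_{σ∈Γ_i}(p_σ s_σ^r)^{s/(s+r)} ≤ c₆(s)·ρ_i(s)^{l(Γ_i)}. -/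
open scoped Classical ENNReal
open Filter MeasureTheory

noncomputable section

namespace MTM

/-- the edge relation of the directed graph `𝒢`: `(i,j) ∈ G₂ ↔ p i j > 0`. -/
def edge (p : ℕ → ℕ → ℝ) (i j : ℕ) : Prop := 0 < p i j

/-- product of transition weights along a word. -/
def pword (p : ℕ → ℕ → ℝ) : List ℕ → ℝ
  | [] => 1
  | [_] => 1
  | a :: b :: t => p a b * pword p (b :: t)

/-- product of contraction ratios along a word. -/
def sword (sr : ℕ → ℕ → ℝ) : List ℕ → ℝ
  | [] => 1
  | [_] => 1
  | a :: b :: t => sr a b * sword sr (b :: t)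

/-- `𝒯(σ)`: all lifts of a word, each letter `i` may be replaced by `i + N`. -/
def lifts (N : ℕ) : List ℕ → Finset (List ℕ)
  | [] => {[]}
  | i :: t => (lifts N t).biUnion fun l => {i :: l, (i + N) :: l}

/-- `Γ(σ) = G_n ∩ 𝒯(σ)`. -/
def Gam (p : ℕ → ℕ → ℝ) (N : ℕ) (σ : List ℕ) : Finset (List ℕ) :=
  (lifts N σ).filter fun τ => τ.Chain' (edge p)

/-- words over the alphabet `Ψ = {1,…,N}`. -/
def isPsiWord (N : ℕ) (σ : List ℕ) : Prop :=
  σ ≠ [] ∧ ∀ x ∈ σ, x ∈ Finset.Icc 1 N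

/-- `σ ∈ 𝒮_*`: a `Ψ`-word having at least one admissible lift. -/
def isSword (p : ℕ → ℕ → ℝ) (N : ℕ) (σ : List ℕ) : Prop :=
  isPsiWord N σ ∧ (Gam p N σ).Nonempty

/-- `σ ∈ G_*`: admissible words over `Ω = {1,…,2N}`. -/
def isGword (p : ℕ → ℕ → ℝ) (N : ℕ) (σ : List ℕ) : Prop :=
  σ ≠ [] ∧ (∀ x ∈ σ, x ∈ Finset.Icc 1 (2 * N)) ∧ σ.Chain' (edge p)

/-- `σ ∈ H₁^*`: admissible words with all letters in `Ψ`. -/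
def isH1word (p : ℕ → ℕ → ℝ) (N : ℕ) (σ : List ℕ) : Prop :=
  σ ≠ [] ∧ (∀ x ∈ σ, x ∈ Finset.Icc 1 N) ∧ σ.Chain' (edge p)

/-- `σ ∈ H₂^*`: admissible words with all letters in `Υ = {N+1,…,2N}`. -/
def isH2word (p : ℕ → ℕ → ℝ) (N : ℕ) (σ : List ℕ) : Prop :=
  σ ≠ [] ∧ (∀ x ∈ σ, x ∈ Finset.Icc (N + 1) (2 * N)) ∧ σ.Chain' (edge p)

/-- `μ(J_σ) = Σ_{σ̃ ∈ Γ(σ)} χ_{σ̃₁} p_{σ̃}`. -/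
def muJ (p : ℕ → ℕ → ℝ) (χ : ℕ → ℝ) (N : ℕ) (σ : List ℕ) : ℝ :=
  ∑ τ ∈ Gam p N σ, χ (τ.headD 0) * pword p τ

/-- `ℰ_r(σ) = μ(J_σ) s_σ^r`, with `ℰ_r(θ) = 1` for the empty word. -/
def Er (p : ℕ → ℕ → ℝ) (χ : ℕ → ℝ) (sr : ℕ → ℕ → ℝ) (N : ℕ) (r : ℝ) (σ : List ℕ) : ℝ :=
  if σ = [] then 1 else muJ p χ N σ * sword sr σ ^ r

/-- `I_{1,σ}` resp. `I_{2,σ}`: the part of `μ(J_σ)` coming from lifts ending with `i`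
(resp. with `i⁺`, when applied with `i + N`). -/
def Ipart (p : ℕ → ℕ → ℝ) (χ : ℕ → ℝ) (N : ℕ) (i : ℕ) (σ : List ℕ) : ℝ :=
  ∑ τ ∈ (Gam p N σ).filter (fun τ => τ.getLastD 0 = i), χ (τ.headD 0) * pword p τ

/-- all words of a given length over a finite alphabet. -/
def wordsOfLen (S : Finset ℕ) : ℕ → Finset (List ℕ)
  | 0 => {[]}
  | n + 1 => (wordsOfLen S n).biUnion fun l => S.image fun a => a :: l

/-- `𝒮_n` as a finite set of words. -/
def Sn (p : ℕ → ℕ → ℝ) (N n : ℕ) : Finset (List ℕ) :=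
  (wordsOfLen (Finset.Icc 1 N) n).filter (isSword p N)

/-- irreducibility of the sub-matrix of `p` indexed by `S`: the corresponding directed
graph is strongly connected. -/
def irreducibleOn (p : ℕ → ℕ → ℝ) (S : Finset ℕ) : Prop :=
  ∀ i ∈ S, ∀ j ∈ S, ∃ c : List ℕ, (∀ x ∈ c, x ∈ S) ∧ List.Chain (edge p) i (c ++ [j])

/-- Assumption (A1): `P₁, P₂` irreducible and `P₄ = 0`. -/
def A1 (p : ℕ → ℕ → ℝ) (N : ℕ) : Prop :=
  irreducibleOn p (Finset.Icc 1 N) ∧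
    irreducibleOn (fun a b => p (a + N) (b + N)) (Finset.Icc 1 N) ∧
    ∀ i ∈ Finset.Icc 1 N, ∀ j ∈ Finset.Icc 1 N, p (i + N) j = 0

/-- Assumption (A2). -/
def A2 (p : ℕ → ℕ → ℝ) (N : ℕ) : Prop :=
  ∀ i ∈ Finset.Icc 1 N,
    2 ≤ ((Finset.Icc 1 N).filter fun j => 0 < p i j).card ∧
      2 ≤ ((Finset.Icc 1 N).filter fun j => 0 < p (i + N) (j + N)).card

/-- Assumption (A3): `ℳ_{i,j} = ∅` or `ℳ_{i,j} = {(i,j),(i,j⁺),(i⁺,j⁺)}`. -/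
def A3 (p : ℕ → ℕ → ℝ) (N : ℕ) : Prop :=
  ∀ i ∈ Finset.Icc 1 N, ∀ j ∈ Finset.Icc 1 N,
    (p i j = 0 ∧ p i (j + N) = 0 ∧ p (i + N) j = 0 ∧ p (i + N) (j + N) = 0) ∨
      (0 < p i j ∧ 0 < p i (j + N) ∧ p (i + N) j = 0 ∧ 0 < p (i + N) (j + N))

/-- Assumption (A4): `ℳ_{i,j} = ∅` or `ℳ_{i,j} = 𝒩_{i,j}`. -/
def A4 (p : ℕ → ℕ → ℝ) (N : ℕ) : Prop :=
  ∀ i ∈ Finset.Icc 1 N, ∀ j ∈ Finset.Icc 1 N,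
    (p i j = 0 ∧ p i (j + N) = 0 ∧ p (i + N) j = 0 ∧ p (i + N) (j + N) = 0) ∨
      (0 < p i j ∧ 0 < p i (j + N) ∧ 0 < p (i + N) j ∧ 0 < p (i + N) (j + N))

/-- Assumption (A5): `P₁` is irreducible. -/
def A5 (p : ℕ → ℕ → ℝ) (N : ℕ) : Prop := irreducibleOn p (Finset.Icc 1 N)

/-- `T_σ = T_{σ₁σ₂} ∘ ⋯ ∘ T_{σ_{n-1}σ_n}` (identity for words of length `≤ 1`). -/
def Tword {E : Type*} (T : ℕ → ℕ → E → E) : List ℕ → E → E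
  | [], x => x
  | [_], x => x
  | a :: b :: t, x => T a b (Tword T (b :: t) x)

/-- the cylinder set `J_σ = T_σ (J_{σ_n})`. -/
def Jword {E : Type*} (T : ℕ → ℕ → E → E) (J : ℕ → Set E) (σ : List ℕ) : Set E :=
  Tword T σ '' J (σ.getLastD 0)

/-- the Mauldin–Williams fractal `K = ⋂_k ⋃_{σ ∈ G_k} J_σ`. -/
def attractor {E : Type*} (p : ℕ → ℕ → ℝ) (N : ℕ) (T : ℕ → ℕ → E → E) (J : ℕ → Set E) :
    Set E :=
  ⋂ n : ℕ, ⋃ σ ∈ {σ : List ℕ | isGword p N σ ∧ σ.length = n + 1}, Jword T J σ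

/-- `μ` is reducible: `μ = ν₁ ∘ π₁⁻¹` for the Markov-type measure `ν₁` associated with some
`N × N` row-stochastic matrix and positive probability vector; equivalently, the cylinder
values of `μ` are of Markov type. -/
def reducible {E : Type*} [MeasurableSpace E] (p : ℕ → ℕ → ℝ) (N : ℕ)
    (T : ℕ → ℕ → E → E) (J : ℕ → Set E) (μ : Measure E) : Prop :=
  ∃ (pt : ℕ → ℕ → ℝ) (χt : ℕ → ℝ),
    (∀ i ∈ Finset.Icc 1 N, ∀ j ∈ Finset.Icc 1 N, 0 ≤ pt i j) ∧
      (∀ i ∈ Finset.Icc 1 N, ∑ j ∈ Finset.Icc 1 N, pt i j = 1) ∧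
      (∀ i ∈ Finset.Icc 1 N, 0 < χt i) ∧
      (∑ i ∈ Finset.Icc 1 N, χt i = 1) ∧
      ∀ σ : List ℕ, isSword p N σ →
        μ (Jword T J σ) = ENNReal.ofReal (χt (σ.headD 0) * pword pt σ)

/-- `e^r_{k,r}(μ)`: the `k`-th quantization error of order `r`, to the `r`-th power. -/
def quantErr {E : Type*} [PseudoMetricSpace E] [MeasurableSpace E] (r : ℝ) (μ : Measure E)
    (k : ℕ) : ℝ :=
  sInf ((fun α : Set E => ∫ x, Metric.infDist x α ^ r ∂μ) ''
    {α : Set E | α.Nonempty ∧ α.Finite ∧ α.ncard ≤ k})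

/-- the upper quantization coefficient `Q̄_r^s(μ) = limsup_k k^{r/s} e^r_{k,r}(μ)`. -/
def upperQC {E : Type*} [PseudoMetricSpace E] [MeasurableSpace E] (r s : ℝ)
    (μ : Measure E) : ℝ≥0∞ :=
  limsup (fun k : ℕ => ENNReal.ofReal ((k : ℝ) ^ (r / s) * quantErr r μ k)) atTop

/-- the lower quantization coefficient `Q̲_r^s(μ)`. -/
def lowerQC {E : Type*} [PseudoMetricSpace E] [MeasurableSpace E] (r s : ℝ)
    (μ : Measure E) : ℝ≥0∞ :=
  liminf (fun k : ℕ => ENNReal.ofReal ((k : ℝ) ^ (r / s) * quantErr r μ k)) atTop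

/-- the upper quantization dimension `D̄_r(μ) = limsup_k log k / (-log e_{k,r}(μ))`. -/
def upperQD {E : Type*} [PseudoMetricSpace E] [MeasurableSpace E] (r : ℝ)
    (μ : Measure E) : ℝ :=
  limsup (fun k : ℕ => Real.log k / (-Real.log (quantErr r μ k ^ (1 / r)))) atTop

/-- the lower quantization dimension `D̲_r(μ)`. -/
def lowerQD {E : Type*} [PseudoMetricSpace E] [MeasurableSpace E] (r : ℝ)
    (μ : Measure E) : ℝ :=
  liminf (fun k : ℕ => Real.log k / (-Real.log (quantErr r μ k ^ (1 / r)))) atTop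

/-- spectral radius of a real matrix: the largest modulus of a complex eigenvalue. -/
def specRad {n : Type*} [Fintype n] [DecidableEq n] (M : Matrix n n ℝ) : ℝ :=
  sSup (norm '' spectrum ℂ (M.map (algebraMap ℝ ℂ)))

/-- `A₁(s) = ((p_{i,j} s_{i,j}^r)^s)_{i,j=1}^N`. -/
def matA1 (p sr : ℕ → ℕ → ℝ) (N : ℕ) (r s : ℝ) : Matrix (Fin N) (Fin N) ℝ :=
  Matrix.of fun i j => (p (i.1 + 1) (j.1 + 1) * sr (i.1 + 1) (j.1 + 1) ^ r) ^ s

/-- `A₂(s) = ((p_{i⁺,j⁺} s_{i⁺,j⁺}^r)^s)_{i,j=1}^N`. -/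
def matA2 (p sr : ℕ → ℕ → ℝ) (N : ℕ) (r s : ℝ) : Matrix (Fin N) (Fin N) ℝ :=
  Matrix.of fun i j => (p (i.1 + 1 + N) (j.1 + 1 + N) * sr (i.1 + 1 + N) (j.1 + 1 + N) ^ r) ^ s

/-- `A₃(s) = ((p_{i,j⁺} s_{i,j⁺}^r)^s)_{i,j=1}^N`. -/
def matA3 (p sr : ℕ → ℕ → ℝ) (N : ℕ) (r s : ℝ) : Matrix (Fin N) (Fin N) ℝ :=
  Matrix.of fun i j => (p (i.1 + 1) (j.1 + 1 + N) * sr (i.1 + 1) (j.1 + 1 + N) ^ r) ^ s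

/-- `A₄(s) = ((p_{i⁺,j} s_{i⁺,j}^r)^s)_{i,j=1}^N`. -/
def matA4 (p sr : ℕ → ℕ → ℝ) (N : ℕ) (r s : ℝ) : Matrix (Fin N) (Fin N) ℝ :=
  Matrix.of fun i j => (p (i.1 + 1 + N) (j.1 + 1) * sr (i.1 + 1 + N) (j.1 + 1) ^ r) ^ s

/-- the block matrix `A(s) = [[A₁(s), A₃(s)], [A₄(s), A₂(s)]]`. -/
def matA (p sr : ℕ → ℕ → ℝ) (N : ℕ) (r s : ℝ) :
    Matrix (Fin N ⊕ Fin N) (Fin N ⊕ Fin N) ℝ :=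
  Matrix.fromBlocks (matA1 p sr N r s) (matA3 p sr N r s) (matA4 p sr N r s) (matA2 p sr N r s)

/-- `p̲ = min_{(i,j) ∈ G₂} p_{i,j}`. -/
def pMin (p : ℕ → ℕ → ℝ) (N : ℕ) : ℝ :=
  sInf {x | ∃ i ∈ Finset.Icc 1 (2 * N), ∃ j ∈ Finset.Icc 1 (2 * N), 0 < p i j ∧ x = p i j}

/-- `p̄ = max_{(i,j) ∈ G₂} p_{i,j}`. -/
def pMax (p : ℕ → ℕ → ℝ) (N : ℕ) : ℝ :=
  sSup {x | ∃ i ∈ Finset.Icc 1 (2 * N), ∃ j ∈ Finset.Icc 1 (2 * N), 0 < p i j ∧ x = p i j}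

/-- `s̲ = min_{(i,j) ∈ 𝒮₂} s_{i,j}`. -/
def sMin (p sr : ℕ → ℕ → ℝ) (N : ℕ) : ℝ :=
  sInf {x | ∃ i ∈ Finset.Icc 1 N, ∃ j ∈ Finset.Icc 1 N, isSword p N [i, j] ∧ x = sr i j}

/-- `s̄ = max_{(i,j) ∈ 𝒮₂} s_{i,j}`. -/
def sMax (p sr : ℕ → ℕ → ℝ) (N : ℕ) : ℝ :=
  sSup {x | ∃ i ∈ Finset.Icc 1 N, ∃ j ∈ Finset.Icc 1 N, isSword p N [i, j] ∧ x = sr i j}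

/-- `χ̲ = min_{1 ≤ i ≤ 2N} χ_i`. -/
def chiMin (χ : ℕ → ℝ) (N : ℕ) : ℝ := sInf {x | ∃ i ∈ Finset.Icc 1 (2 * N), x = χ i}

/-- `χ̄ = max_{1 ≤ i ≤ 2N} χ_i`. -/
def chiMax (χ : ℕ → ℝ) (N : ℕ) : ℝ := sSup {x | ∃ i ∈ Finset.Icc 1 (2 * N), x = χ i}

/-- `t` satisfies the defining property of `t_r`:
`(1/n) log Σ_{σ ∈ 𝒮_n} ℰ_r(σ)^{t/(t+r)} → 0`. -/
def trCond (p : ℕ → ℕ → ℝ) (χ : ℕ → ℝ) (sr : ℕ → ℕ → ℝ) (N : ℕ) (r t : ℝ) : Prop :=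
  0 < t ∧
    Tendsto (fun n : ℕ => (n : ℝ)⁻¹ *
      Real.log (∑ σ ∈ Sn p N n, Er p χ sr N r σ ^ (t / (t + r)))) atTop (nhds 0)

/-- the initial word of length `n` of an infinite sequence. -/
def seqTake (x : ℕ → ℕ) (n : ℕ) : List ℕ := (List.range n).map x

/-- `Γ` is a finite maximal antichain among the words satisfying `W`, with respect to the
infinite sequences satisfying `Wseq`. -/
def isMaxAntichain (W : List ℕ → Prop) (Wseq : (ℕ → ℕ) → Prop) (Γ : Finset (List ℕ)) : Prop :=
  (∀ σ ∈ Γ, W σ) ∧ (∀ σ ∈ Γ, ∀ τ ∈ Γ, σ ≠ τ → ¬σ <+: τ) ∧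
    ∀ x : ℕ → ℕ, Wseq x → ∃ n : ℕ, 1 ≤ n ∧ seqTake x n ∈ Γ

/-- infinite admissible sequences with letters in `Ψ`. -/
def isH1seq (p : ℕ → ℕ → ℝ) (N : ℕ) (x : ℕ → ℕ) : Prop :=
  (∀ n, x n ∈ Finset.Icc 1 N) ∧ ∀ n, 0 < p (x n) (x (n + 1))

/-- infinite admissible sequences with letters in `Υ`. -/
def isH2seq (p : ℕ → ℕ → ℝ) (N : ℕ) (x : ℕ → ℕ) : Prop :=
  (∀ n, x n ∈ Finset.Icc (N + 1) (2 * N)) ∧ ∀ n, 0 < p (x n) (x (n + 1))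

/-- minimal length of a word in `Γ`. -/
def minLen (Γ : Finset (List ℕ)) : ℕ := sInf {n | ∃ σ ∈ Γ, σ.length = n}

/-- maximal length of a word in `Γ`. -/
def maxLen (Γ : Finset (List ℕ)) : ℕ := sSup {n | ∃ σ ∈ Γ, σ.length = n}

/-- `Λ_{k,r} = {σ ∈ 𝒮^* : ℰ_r(σ) < c₁^k ≤ ℰ_r(σ^♭)}`. -/
def LamSet (p : ℕ → ℕ → ℝ) (χ : ℕ → ℝ) (sr : ℕ → ℕ → ℝ) (N : ℕ) (r c1 : ℝ) (k : ℕ) :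
    Set (List ℕ) :=
  {σ | isSword p N σ ∧ Er p χ sr N r σ < c1 ^ k ∧ c1 ^ k ≤ Er p χ sr N r σ.dropLast}

/-- `ℒ(σ) = {σ, σ⁺} ∪ {σ|_h ∗ (σ_{h+1}⁺, …, σ_n⁺) : 1 ≤ h ≤ n − 1}`. -/
def Lset (N : ℕ) (σ : List ℕ) : Finset (List ℕ) :=
  (Finset.range (σ.length + 1)).image fun h =>
    σ.take h ++ (σ.drop h).map (fun x => x + N)

section Aux
variable {N : ℕ}





/-- matrix irreducibility via chains -/
def matIrred (A : Matrix (Fin N) (Fin N) ℝ) : Prop :=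
  ∀ i j, ∃ c : List (Fin N), List.Chain (fun a b => 0 < A a b) i (c ++ [j])

/-- Collatz–Wielandt set -/
def cwSet (A : Matrix (Fin N) (Fin N) ℝ) : Set ℝ :=
  {θ | ∃ v : Fin N → ℝ, (∀ i, 0 ≤ v i) ∧ (∑ i, v i = 1) ∧ ∀ i, θ * v i ≤ A.mulVec v i}

def cwLam (A : Matrix (Fin N) (Fin N) ℝ) : ℝ := sSup (cwSet A)

lemma pow_entry_nonneg {A : Matrix (Fin N) (Fin N) ℝ} (hA : ∀ i j, 0 ≤ A i j) :
    ∀ k i j, 0 ≤ (A ^ k) i j := by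
  intro k
  induction k with
  | zero => intro i j; by_cases h : i = j <;> simp [pow_zero, Matrix.one_apply, h]
  | succ k ih =>
    intro i j
    rw [pow_succ', Matrix.mul_apply]
    exact Finset.sum_nonneg fun m _ => mul_nonneg (hA i m) (ih m j)

lemma pow_entry_pos_of_chain {A : Matrix (Fin N) (Fin N) ℝ} (hA : ∀ i j, 0 ≤ A i j) :
    ∀ (c : List (Fin N)) (i j : Fin N), List.Chain (fun a b => 0 < A a b) i (c ++ [j]) →
      0 < (A ^ (c.length + 1)) i j := by
  intro c
  induction c with
  | nil =>
    intro i j h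
    simp only [List.nil_append, List.Chain, List.chain_cons] at h
    simpa [pow_one] using h.1
  | cons a t ih =>
    intro i j h
    simp only [List.cons_append, List.Chain, List.chain_cons] at h
    have h2 := ih a j h.2
    have hrw : (A ^ (t.length + 1 + 1)) i j = ∑ m, A i m * (A ^ (t.length + 1)) m j := by
      rw [pow_succ', Matrix.mul_apply]
    rw [show (a :: t).length + 1 = t.length + 1 + 1 by simp, hrw]
    have hnn : ∀ m ∈ Finset.univ, 0 ≤ A i m * (A ^ (t.length + 1)) m j :=
      fun m _ => mul_nonneg (hA i m) (pow_entry_nonneg hA _ m j)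
    calc (0:ℝ) < A i a * (A ^ (t.length + 1)) a j := mul_pos h.1 h2
    _ ≤ ∑ m, A i m * (A ^ (t.length + 1)) m j := Finset.single_le_sum hnn (Finset.mem_univ a)

/-- a matrix with all entries positive, commuting with A -/
lemma exists_posMat {A : Matrix (Fin N) (Fin N) ℝ} (hA : ∀ i j, 0 ≤ A i j)
    (hirr : matIrred A) :
    ∃ B : Matrix (Fin N) (Fin N) ℝ, (∀ i j, 0 < B i j) ∧ A * B = B * A ∧
      ∃ M : ℕ, 1 ≤ M ∧ B = ∑ k ∈ Finset.Icc 1 M, A ^ k := by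
  classical
  have hex : ∀ i j : Fin N, ∃ L : ℕ, 1 ≤ L ∧ 0 < (A ^ L) i j := by
    intro i j
    obtain ⟨c, hc⟩ := hirr i j
    exact ⟨c.length + 1, Nat.le_add_left _ _, pow_entry_pos_of_chain hA c i j hc⟩
  choose L hL1 hLpos using hex
  set M : ℕ := Finset.sup Finset.univ (fun p : Fin N × Fin N => L p.1 p.2) ⊔ 1 with hMdef
  refine ⟨∑ k ∈ Finset.Icc 1 M, A ^ k, ?_, ?_, M, le_sup_right, rfl⟩
  · intro i j
    have hmem : L i j ∈ Finset.Icc 1 M := by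
      refine Finset.mem_Icc.2 ⟨hL1 i j, ?_⟩
      exact le_sup_of_le_left (Finset.le_sup (f := fun p : Fin N × Fin N => L p.1 p.2)
        (Finset.mem_univ (i, j)))
    have : ∑ k ∈ Finset.Icc 1 M, (A ^ k) i j = (∑ k ∈ Finset.Icc 1 M, A ^ k) i j := by
      simp [Matrix.sum_apply]
    rw [← this]
    refine lt_of_lt_of_le (hLpos i j) ?_
    exact Finset.single_le_sum (fun k _ => pow_entry_nonneg hA k i j) hmem
  · rw [Finset.mul_sum, Finset.sum_mul]
    refine Finset.sum_congr rfl fun k _ => ?_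
    rw [← pow_succ, ← pow_succ']


lemma simplex_compact :
    IsCompact {v : Fin N → ℝ | (∀ i, 0 ≤ v i) ∧ ∑ i, v i = 1} := by
  have hclosed : IsClosed {v : Fin N → ℝ | (∀ i, 0 ≤ v i) ∧ ∑ i, v i = 1} := by
    have h1 : IsClosed {v : Fin N → ℝ | ∀ i, 0 ≤ v i} := by
      have : {v : Fin N → ℝ | ∀ i, 0 ≤ v i} = ⋂ i, {v | 0 ≤ v i} := by
        ext v; simp [Set.mem_iInter]
      rw [this]
      exact isClosed_iInter fun i => isClosed_le continuous_const (continuous_apply i)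
    have h2 : IsClosed {v : Fin N → ℝ | ∑ i, v i = 1} :=
      isClosed_eq (by continuity) continuous_const
    exact h1.inter h2
  have hbdd : Bornology.IsBounded {v : Fin N → ℝ | (∀ i, 0 ≤ v i) ∧ ∑ i, v i = 1} := by
    refine (Metric.isBounded_closedBall (x := (0 : Fin N → ℝ)) (r := 1)).subset ?_
    intro v hv
    rw [Metric.mem_closedBall, dist_zero_right]
    refine (pi_norm_le_iff_of_nonneg zero_le_one).2 fun i => ?_
    rw [Real.norm_eq_abs, abs_of_nonneg (hv.1 i)]
    calc v i ≤ ∑ j, v j := Finset.single_le_sum (fun j _ => hv.1 j) (Finset.mem_univ i)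
    _ = 1 := hv.2
  exact Metric.isCompact_of_isClosed_isBounded hclosed hbdd

lemma cwSet_bddAbove (A : Matrix (Fin N) (Fin N) ℝ) (hA : ∀ i j, 0 ≤ A i j) :
    BddAbove (cwSet A) := by
  refine ⟨∑ i, ∑ j, A i j, fun θ hθ => ?_⟩
  obtain ⟨v, hv0, hv1, hvle⟩ := hθ
  have hNpos : 0 < N := by
    by_contra h
    push_neg at h
    interval_cases N
    simp at hv1
  have huniv : (Finset.univ : Finset (Fin N)).Nonempty := ⟨⟨0, hNpos⟩, Finset.mem_univ _⟩
  obtain ⟨i, _, hi⟩ := Finset.exists_max_image Finset.univ v huniv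
  have hvi : 0 < v i := by
    by_contra h
    push_neg at h
    have : ∑ j, v j ≤ 0 := Finset.sum_nonpos fun j _ => le_trans (hi j (Finset.mem_univ j)) h
    linarith
  have h1 : θ * v i ≤ (∑ j, A i j) * v i := by
    calc θ * v i ≤ A.mulVec v i := hvle i
    _ = ∑ j, A i j * v j := by rw [Matrix.mulVec, dotProduct]
    _ ≤ ∑ j, A i j * v i :=
      Finset.sum_le_sum fun j _ => mul_le_mul_of_nonneg_left (hi j (Finset.mem_univ j)) (hA i j)
    _ = (∑ j, A i j) * v i := by rw [Finset.sum_mul]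
  have h2 : θ ≤ ∑ j, A i j := le_of_mul_le_mul_right h1 hvi
  refine h2.trans (Finset.single_le_sum (fun k _ => Finset.sum_nonneg fun j _ => hA k j)
    (Finset.mem_univ i))

lemma cwSet_mem_of_le {A : Matrix (Fin N) (Fin N) ℝ} {θ θ' : ℝ} (h : θ' ≤ θ)
    (hθ : θ ∈ cwSet A) : θ' ∈ cwSet A := by
  obtain ⟨v, hv0, hv1, hvle⟩ := hθ
  exact ⟨v, hv0, hv1, fun i => le_trans (mul_le_mul_of_nonneg_right h (hv0 i)) (hvle i)⟩

lemma cw_pos (hN : 0 < N) (A : Matrix (Fin N) (Fin N) ℝ) (hA : ∀ i j, 0 ≤ A i j)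
    (hirr : matIrred A) : 0 < cwLam A := by
  have huniv : (Finset.univ : Finset (Fin N)).Nonempty := ⟨⟨0, hN⟩, Finset.mem_univ _⟩
  have hrow : ∀ i, 0 < ∑ j, A i j := by
    intro i
    obtain ⟨c, hc⟩ := hirr i i
    have hb : ∃ b, 0 < A i b := by
      cases c with
      | nil => simp only [List.nil_append, List.Chain, List.chain_cons] at hc; exact ⟨i, hc.1⟩
      | cons b t => simp only [List.cons_append, List.Chain, List.chain_cons] at hc; exact ⟨b, hc.1⟩
    obtain ⟨b, hbpos⟩ := hb
    calc (0:ℝ) < A i b := hbpos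
    _ ≤ ∑ j, A i j := Finset.single_le_sum (fun j _ => hA i j) (Finset.mem_univ _)
  set δ := Finset.univ.inf' huniv (fun i => ∑ j, A i j) with hδ
  have hδpos : 0 < δ := by
    rw [hδ, Finset.lt_inf'_iff]
    exact fun i _ => hrow i
  have hδmem : δ ∈ cwSet A := by
    refine ⟨fun _ => (N : ℝ)⁻¹, fun i => by positivity, ?_, fun i => ?_⟩
    · rw [Finset.sum_const, Finset.card_univ, Fintype.card_fin, nsmul_eq_mul]
      field_simp
    · have h1 : A.mulVec (fun _ => (N : ℝ)⁻¹) i = (∑ j, A i j) * (N:ℝ)⁻¹ := by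
        rw [Matrix.mulVec, dotProduct, Finset.sum_mul]
      rw [h1]
      have : δ ≤ ∑ j, A i j := Finset.inf'_le _ (Finset.mem_univ i)
      exact mul_le_mul_of_nonneg_right this (by positivity)
  exact lt_of_lt_of_le hδpos (le_csSup (cwSet_bddAbove A hA) hδmem)

theorem perron (hN : 0 < N) (A : Matrix (Fin N) (Fin N) ℝ)
    (hA : ∀ i j, 0 ≤ A i j) (hirr : matIrred A) :
    ∃ v : Fin N → ℝ, (∀ i, 0 < v i) ∧ A.mulVec v = cwLam A • v := by
  classical
  have huniv : (Finset.univ : Finset (Fin N)).Nonempty := ⟨⟨0, hN⟩, Finset.mem_univ _⟩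
  set lam := cwLam A with hlam
  have hbdd := cwSet_bddAbove A hA
  have hlampos := cw_pos hN A hA hirr
  have hne : (cwSet A).Nonempty := by
    rcases Set.eq_empty_or_nonempty (cwSet A) with h | h
    · exfalso
      rw [cwLam, h] at hlampos
      simp [Real.sSup_empty] at hlampos
    · exact h
  -- approximating sequence
  have happrox : ∀ n : ℕ, lam - ((n:ℝ)+1)⁻¹ ∈ cwSet A := by
    intro n
    have hlt : lam - ((n:ℝ)+1)⁻¹ < lam := by
      have : (0:ℝ) < ((n:ℝ)+1)⁻¹ := by positivity
      linarith
    obtain ⟨θ, hθmem, hθlt⟩ := exists_lt_of_lt_csSup hne hlt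
    exact cwSet_mem_of_le hθlt.le hθmem
  choose vn hvn0 hvn1 hvnle using happrox
  have hmem : ∀ n, vn n ∈ {v : Fin N → ℝ | (∀ i, 0 ≤ v i) ∧ ∑ i, v i = 1} :=
    fun n => ⟨hvn0 n, hvn1 n⟩
  obtain ⟨v, hvΔ, φ, hφ, hconv⟩ := simplex_compact.tendsto_subseq hmem
  have hv0 : ∀ i, 0 ≤ v i := hvΔ.1
  have hv1 : ∑ i, v i = 1 := hvΔ.2
  -- pass to the limit
  have hvle : ∀ i, lam * v i ≤ A.mulVec v i := by
    intro i
    have hco : Tendsto (fun k => vn (φ k) i) atTop (nhds (v i)) :=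
      ((continuous_apply i).tendsto v).comp hconv
    have hinv : Tendsto (fun k : ℕ => ((φ k : ℝ)+1)⁻¹) atTop (nhds 0) := by
      have h1 : Tendsto (fun n : ℕ => ((n:ℝ)+1)⁻¹) atTop (nhds 0) := by
        simpa [one_div] using tendsto_one_div_add_atTop_nhds_zero_nat (𝕜 := ℝ)
      exact h1.comp hφ.tendsto_atTop
    have hL : Tendsto (fun k => (lam - ((φ k : ℝ)+1)⁻¹) * vn (φ k) i) atTop
        (nhds (lam * v i)) := by
      have := (tendsto_const_nhds (x := lam) (f := atTop (α := ℕ))).sub hinv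
      simpa using this.mul hco
    have hR : Tendsto (fun k => A.mulVec (vn (φ k)) i) atTop (nhds (A.mulVec v i)) := by
      simp only [Matrix.mulVec, dotProduct]
      refine tendsto_finset_sum _ fun j _ => ?_
      exact tendsto_const_nhds.mul (((continuous_apply j).tendsto v).comp hconv)
    exact le_of_tendsto_of_tendsto' hL hR fun k => hvnle (φ k) i
  -- v has a positive coordinate
  obtain ⟨j0, hj0⟩ : ∃ j0, 0 < v j0 := by
    by_contra h
    push_neg at h
    have : ∑ i, v i ≤ 0 := Finset.sum_nonpos fun i _ => h i
    linarith
  obtain ⟨B, hBpos, hBcomm, M, hM1, hBsum⟩ := exists_posMat hA hirr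
  -- the eigenvalue equation
  have heig : A.mulVec v = lam • v := by
    by_contra hne'
    set y := A.mulVec v - lam • v with hy
    have hy0 : ∀ i, 0 ≤ y i := fun i => by
      simp only [hy, Pi.sub_apply, Pi.smul_apply, smul_eq_mul, sub_nonneg]
      exact hvle i
    obtain ⟨i0, hi0⟩ : ∃ i0, 0 < y i0 := by
      by_contra h
      push_neg at h
      apply hne'
      have : y = 0 := funext fun i => le_antisymm (h i) (hy0 i)
      rw [hy, sub_eq_zero] at this
      exact this
    set u := B.mulVec v with hu
    have hupos : ∀ i, 0 < u i := by
      intro i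
      have h1 : B i j0 * v j0 ≤ ∑ j, B i j * v j :=
        Finset.single_le_sum (fun j _ => mul_nonneg (hBpos i j).le (hv0 j)) (Finset.mem_univ j0)
      calc (0:ℝ) < B i j0 * v j0 := mul_pos (hBpos i j0) hj0
      _ ≤ ∑ j, B i j * v j := h1
      _ = u i := by rw [hu, Matrix.mulVec, dotProduct]
    have hBy : ∀ i, 0 < B.mulVec y i := by
      intro i
      have h1 : B i i0 * y i0 ≤ ∑ j, B i j * y j :=
        Finset.single_le_sum (fun j _ => mul_nonneg (hBpos i j).le (hy0 j)) (Finset.mem_univ i0)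
      calc (0:ℝ) < B i i0 * y i0 := mul_pos (hBpos i i0) hi0
      _ ≤ ∑ j, B i j * y j := h1
      _ = B.mulVec y i := by rw [Matrix.mulVec, dotProduct]
    have hAu : A.mulVec u = lam • u + B.mulVec y := by
      have h1 : A.mulVec v = lam • v + y := by rw [hy]; abel
      calc A.mulVec u = (A * B).mulVec v := by rw [hu, Matrix.mulVec_mulVec]
      _ = (B * A).mulVec v := by rw [hBcomm]
      _ = B.mulVec (A.mulVec v) := by rw [Matrix.mulVec_mulVec]
      _ = B.mulVec (lam • v + y) := by rw [← h1]
      _ = lam • B.mulVec v + B.mulVec y := by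
          rw [Matrix.mulVec_add, Matrix.mulVec_smul]
      _ = lam • u + B.mulVec y := by rw [hu]
    set ε := Finset.univ.inf' huniv (fun i => B.mulVec y i / u i) with hε
    have hεpos : 0 < ε := by
      rw [hε, Finset.lt_inf'_iff]
      exact fun i _ => div_pos (hBy i) (hupos i)
    have hεle : ∀ i, ε * u i ≤ B.mulVec y i := by
      intro i
      have h1 : ε ≤ B.mulVec y i / u i := Finset.inf'_le _ (Finset.mem_univ i)
      rw [le_div_iff₀ (hupos i)] at h1
      linarith
    have hkey : ∀ i, (lam + ε) * u i ≤ A.mulVec u i := by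
      intro i
      have := hεle i
      have h2 : A.mulVec u i = lam * u i + B.mulVec y i := by
        rw [hAu]; simp [Pi.add_apply, Pi.smul_apply, smul_eq_mul]
      rw [h2]; nlinarith [hupos i]
    -- normalize u
    set su := ∑ i, u i with hsu
    have hsupos : 0 < su :=
      Finset.sum_pos (fun i _ => hupos i) huniv
    have hmem' : lam + ε ∈ cwSet A := by
      refine ⟨fun i => su⁻¹ * u i, fun i => mul_nonneg (inv_nonneg.2 hsupos.le) (hupos i).le, ?_, fun i => ?_⟩
      · rw [← Finset.mul_sum, ← hsu, inv_mul_cancel₀ hsupos.ne']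
      · have h1 : A.mulVec (fun i => su⁻¹ * u i) i = su⁻¹ * A.mulVec u i := by
          simp only [Matrix.mulVec, dotProduct, Finset.mul_sum]
          exact Finset.sum_congr rfl fun j _ => by ring
        rw [h1]
        have := hkey i
        have h2 : (0:ℝ) ≤ su⁻¹ := by positivity
        calc (lam + ε) * (su⁻¹ * u i) = su⁻¹ * ((lam + ε) * u i) := by ring
        _ ≤ su⁻¹ * A.mulVec u i := mul_le_mul_of_nonneg_left (hkey i) h2
    have : lam + ε ≤ lam := le_csSup hbdd hmem'
    linarith
  -- positivity of v
  have hpowv : ∀ k : ℕ, (A ^ k).mulVec v = (lam ^ k) • v := by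
    intro k
    induction k with
    | zero => simp
    | succ k ih =>
      rw [pow_succ', ← Matrix.mulVec_mulVec, ih, Matrix.mulVec_smul, heig, smul_smul,
        pow_succ']
      ring_nf
  have hBv : B.mulVec v = (∑ k ∈ Finset.Icc 1 M, lam ^ k) • v := by
    rw [hBsum]
    have : (∑ k ∈ Finset.Icc 1 M, A ^ k).mulVec v = ∑ k ∈ Finset.Icc 1 M, (A ^ k).mulVec v := by
      funext i
      simp only [Matrix.mulVec, dotProduct, Matrix.sum_apply, Finset.sum_apply,
        Finset.sum_mul]
      exact Finset.sum_comm
    rw [this]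
    rw [Finset.sum_smul]
    exact Finset.sum_congr rfl fun k _ => hpowv k
  set c := ∑ k ∈ Finset.Icc 1 M, lam ^ k with hc
  have hcpos : 0 < c := by
    rw [hc]
    refine Finset.sum_pos (fun k _ => pow_pos hlampos k) ?_
    exact ⟨1, Finset.mem_Icc.2 ⟨le_refl 1, hM1⟩⟩
  have hvpos : ∀ i, 0 < v i := by
    intro i
    have h1 : 0 < B.mulVec v i := by
      have h2 : B i j0 * v j0 ≤ ∑ j, B i j * v j :=
        Finset.single_le_sum (fun j _ => mul_nonneg (hBpos i j).le (hv0 j)) (Finset.mem_univ j0)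
      calc (0:ℝ) < B i j0 * v j0 := mul_pos (hBpos i j0) hj0
      _ ≤ ∑ j, B i j * v j := h2
      _ = B.mulVec v i := by rw [Matrix.mulVec, dotProduct]
    rw [hBv] at h1
    simp only [Pi.smul_apply, smul_eq_mul] at h1
    nlinarith [hv0 i]
  exact ⟨v, hvpos, heig⟩


lemma cw_ge_of_vec (A : Matrix (Fin N) (Fin N) ℝ) (hA : ∀ i j, 0 ≤ A i j)
    {θ : ℝ} {w : Fin N → ℝ} (hw0 : ∀ i, 0 ≤ w i) (hwne : ∃ i, 0 < w i)
    (h : ∀ i, θ * w i ≤ A.mulVec w i) : θ ≤ cwLam A := by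
  obtain ⟨i0, hi0⟩ := hwne
  have hsw : 0 < ∑ i, w i := Finset.sum_pos' (fun i _ => hw0 i) ⟨i0, Finset.mem_univ i0, hi0⟩
  set sw := ∑ i, w i with hswdef
  refine le_csSup (cwSet_bddAbove A hA) ?_
  refine ⟨fun i => sw⁻¹ * w i, fun i => mul_nonneg (inv_nonneg.2 hsw.le) (hw0 i), ?_, fun i => ?_⟩
  · rw [← Finset.mul_sum, inv_mul_cancel₀ hsw.ne']
  · have h1 : A.mulVec (fun i => sw⁻¹ * w i) i = sw⁻¹ * A.mulVec w i := by
      simp only [Matrix.mulVec, dotProduct, Finset.mul_sum]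
      exact Finset.sum_congr rfl fun j _ => by ring
    rw [h1]
    calc θ * (sw⁻¹ * w i) = sw⁻¹ * (θ * w i) := by ring
    _ ≤ sw⁻¹ * A.mulVec w i := mul_le_mul_of_nonneg_left (h i) (inv_nonneg.2 hsw.le)

lemma mem_spectrum_of_eigen {M : Matrix (Fin N) (Fin N) ℂ} {μ : ℂ} {x : Fin N → ℂ}
    (hx : x ≠ 0) (h : M.mulVec x = μ • x) : μ ∈ spectrum ℂ M := by
  rw [spectrum.mem_iff]
  intro hu
  have hker : (algebraMap ℂ (Matrix (Fin N) (Fin N) ℂ) μ - M).mulVec x = 0 := by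
    rw [Matrix.sub_mulVec, h, Algebra.algebraMap_eq_smul_one, Matrix.smul_mulVec,
      Matrix.one_mulVec, sub_self]
  obtain ⟨B, hB⟩ := hu.exists_left_inv
  apply hx
  calc x = (1 : Matrix (Fin N) (Fin N) ℂ).mulVec x := by rw [Matrix.one_mulVec]
  _ = (B * (algebraMap ℂ (Matrix (Fin N) (Fin N) ℂ) μ - M)).mulVec x := by rw [hB]
  _ = B.mulVec ((algebraMap ℂ (Matrix (Fin N) (Fin N) ℂ) μ - M).mulVec x) := by
      rw [Matrix.mulVec_mulVec]
  _ = 0 := by rw [hker, Matrix.mulVec_zero]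

lemma eigen_of_mem_spectrum {M : Matrix (Fin N) (Fin N) ℂ} {μ : ℂ}
    (h : μ ∈ spectrum ℂ M) : ∃ x : Fin N → ℂ, x ≠ 0 ∧ M.mulVec x = μ • x := by
  rw [spectrum.mem_iff] at h
  have hdet : (algebraMap ℂ (Matrix (Fin N) (Fin N) ℂ) μ - M).det = 0 := by
    by_contra hd
    exact h ((Matrix.isUnit_iff_isUnit_det _).2 (isUnit_iff_ne_zero.2 hd))
  obtain ⟨x, hx, hker⟩ := Matrix.exists_mulVec_eq_zero_iff.2 hdet
  refine ⟨x, hx, ?_⟩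
  rw [Matrix.sub_mulVec, Algebra.algebraMap_eq_smul_one, Matrix.smul_mulVec,
    Matrix.one_mulVec, sub_eq_zero] at hker
  exact hker.symm

theorem specRad_eq_cwLam (hN : 0 < N) (A : Matrix (Fin N) (Fin N) ℝ)
    (hA : ∀ i j, 0 ≤ A i j) (hirr : matIrred A) : specRad A = cwLam A := by
  classical
  obtain ⟨v, hvpos, heig⟩ := perron hN A hA hirr
  set lam := cwLam A with hlamdef
  have hlampos := cw_pos hN A hA hirr
  set Mc := A.map (algebraMap ℝ ℂ) with hMc
  have heig' : ∀ i, ∑ j, A i j * v j = lam * v i := by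
    intro i
    have := congrFun heig i
    rwa [Matrix.mulVec, dotProduct, Pi.smul_apply, smul_eq_mul] at this
  -- lam is in the spectrum
  have hmem : (lam : ℂ) ∈ spectrum ℂ Mc := by
    refine mem_spectrum_of_eigen (x := fun i => (v i : ℂ)) ?_ ?_
    · intro h0
      have := congrFun h0 ⟨0, hN⟩
      simp only [Pi.zero_apply, Complex.ofReal_eq_zero] at this
      exact (hvpos ⟨0, hN⟩).ne' this
    · funext i
      simp only [Matrix.mulVec, dotProduct, Pi.smul_apply, smul_eq_mul, hMc,
        Matrix.map_apply]
      have : ((∑ j, A i j * v j : ℝ) : ℂ) = ((lam * v i : ℝ) : ℂ) := by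
        exact_mod_cast congrArg Complex.ofReal (heig' i)
      push_cast at this
      simpa using this
  have hmemim : lam ∈ norm '' spectrum ℂ Mc :=
    ⟨(lam : ℂ), hmem, by simp [Complex.norm_real, abs_of_pos hlampos]; exact hlampos.le⟩
  -- every spectral value has norm at most lam
  have hub : ∀ z ∈ norm '' spectrum ℂ Mc, z ≤ lam := by
    rintro _ ⟨μ, hμ, rfl⟩
    obtain ⟨x, hx, hxe⟩ := eigen_of_mem_spectrum hμ
    set w : Fin N → ℝ := fun i => ‖x i‖ with hw
    have hw0 : ∀ i, 0 ≤ w i := fun i => norm_nonneg _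
    have hwne : ∃ i, 0 < w i := by
      obtain ⟨i, hi⟩ := Function.ne_iff.1 hx
      exact ⟨i, norm_pos_iff.2 hi⟩
    refine cw_ge_of_vec A hA hw0 hwne fun i => ?_
    have h1 : ‖μ‖ * w i = ‖(Mc.mulVec x) i‖ := by
      rw [hxe, Pi.smul_apply, smul_eq_mul, norm_mul, hw]
    have h2 : ‖(Mc.mulVec x) i‖ ≤ ∑ j, A i j * w j := by
      rw [Matrix.mulVec, dotProduct]
      refine (norm_sum_le _ _).trans ?_
      refine Finset.sum_le_sum fun j _ => ?_
      rw [norm_mul, hMc, Matrix.map_apply]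
      have hcoe : ‖(algebraMap ℝ ℂ) (A i j)‖ = A i j := by
        rw [Complex.coe_algebraMap, Complex.norm_real, Real.norm_eq_abs, abs_of_nonneg (hA i j)]
      rw [hcoe, hw]
    have h3 : A.mulVec w i = ∑ j, A i j * w j := by
      rw [Matrix.mulVec, dotProduct]
    rw [h3]
    calc ‖μ‖ * w i = ‖(Mc.mulVec x) i‖ := h1
    _ ≤ ∑ j, A i j * w j := h2
  rw [specRad]
  exact le_antisymm (csSup_le ⟨lam, hmemim⟩ hub) (le_csSup ⟨lam, hub⟩ hmemim)

lemma cwLam_mono (hN : 0 < N) {A B : Matrix (Fin N) (Fin N) ℝ}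
    (hA : ∀ i j, 0 ≤ A i j) (hAB : ∀ i j, A i j ≤ B i j) : cwLam A ≤ cwLam B := by
  have hB : ∀ i j, 0 ≤ B i j := fun i j => (hA i j).trans (hAB i j)
  have hsub : cwSet A ⊆ cwSet B := by
    rintro θ ⟨v, hv0, hv1, hvle⟩
    refine ⟨v, hv0, hv1, fun i => (hvle i).trans ?_⟩
    simp only [Matrix.mulVec, dotProduct]
    exact Finset.sum_le_sum fun j _ => mul_le_mul_of_nonneg_right (hAB i j) (hv0 j)
  have hAne : (cwSet A).Nonempty := by
    refine ⟨0, fun _ => (N:ℝ)⁻¹, fun i => by positivity, ?_, fun i => ?_⟩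
    · rw [Finset.sum_const, Finset.card_univ, Fintype.card_fin, nsmul_eq_mul]
      field_simp
    · rw [zero_mul, Matrix.mulVec, dotProduct]
      exact Finset.sum_nonneg fun j _ => mul_nonneg (hA i j) (by positivity)
  exact csSup_le_csSup (cwSet_bddAbove B hB) hAne hsub







/-- words extending `σ` by `k` letters from `S` -/
def Ext (S : Finset ℕ) : ℕ → List ℕ → Finset (List ℕ)
  | 0, σ => {σ}
  | k+1, σ => (Ext S k σ).biUnion fun τ => S.image fun a => τ ++ [a]

lemma getLastD_mem {l : List ℕ} (h : l ≠ []) : l.getLastD 0 ∈ l := by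
  cases l with
  | nil => exact absurd rfl h
  | cons a t => rw [List.getLastD_cons]; exact List.getLastD_mem_cons

lemma getLastD_cons_cons (a b : ℕ) (l : List ℕ) (d : ℕ) :
    (a :: b :: l).getLastD d = (b :: l).getLastD d := by
  simp [List.getLastD_cons]

lemma mem_Ext {S : Finset ℕ} : ∀ {k : ℕ} {σ τ : List ℕ},
    τ ∈ Ext S k σ ↔ ∃ l : List ℕ, (∀ x ∈ l, x ∈ S) ∧ l.length = k ∧ τ = σ ++ l := by
  intro k
  induction k with
  | zero =>
    intro σ τ
    simp only [Ext, Finset.mem_singleton]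
    constructor
    · rintro rfl; exact ⟨[], by simp, rfl, by simp⟩
    · rintro ⟨l, _, hl, rfl⟩
      rw [List.length_eq_zero_iff] at hl
      simp [hl]
  | succ k ih =>
    intro σ τ
    simp only [Ext, Finset.mem_biUnion, Finset.mem_image]
    constructor
    · rintro ⟨τ', hτ', a, ha, rfl⟩
      obtain ⟨l, hlS, hlen, rfl⟩ := ih.1 hτ'
      exact ⟨l ++ [a], by
        intro x hx
        rcases List.mem_append.1 hx with h | h
        · exact hlS x h
        · rw [List.mem_singleton] at h; subst h; exact ha, by simp [hlen], by simp⟩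
    · rintro ⟨l, hlS, hlen, rfl⟩
      have hl : l ≠ [] := by intro h; subst h; simp at hlen
      obtain ⟨l', a, rfl⟩ : ∃ l' a, l = l' ++ [a] := by
        rcases List.eq_nil_or_concat l with h | ⟨l', a, h⟩
        · exact absurd h hl
        · exact ⟨l', a, by simpa [List.concat_eq_append] using h⟩
      refine ⟨σ ++ l', ih.2 ⟨l', fun x hx => hlS x (by simp [hx]), by
        simpa using hlen, rfl⟩, a, hlS a (by simp), by simp⟩

lemma Ext_length {S : Finset ℕ} {k : ℕ} {σ τ : List ℕ} (h : τ ∈ Ext S k σ) :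
    τ.length = σ.length + k := by
  obtain ⟨l, _, hlen, rfl⟩ := mem_Ext.1 h
  simp [hlen]

lemma Ext_prefix {S : Finset ℕ} {k : ℕ} {σ τ : List ℕ} (h : τ ∈ Ext S k σ) : σ <+: τ := by
  obtain ⟨l, _, _, rfl⟩ := mem_Ext.1 h
  exact ⟨l, rfl⟩

lemma pword_snoc (w : ℕ → ℕ → ℝ) : ∀ (σ : List ℕ), σ ≠ [] → ∀ a,
    pword w (σ ++ [a]) = pword w σ * w (σ.getLastD 0) a := by
  intro σ
  induction σ with
  | nil => intro h; exact absurd rfl h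
  | cons b t ih =>
    cases t with
    | nil => intro _ a; simp [pword, List.getLastD]
    | cons c t' =>
      intro _ a
      have h1 : (b :: c :: t') ++ [a] = b :: ((c :: t') ++ [a]) := by simp
      rw [h1]
      have h2 : pword w (b :: (c :: t' ++ [a])) = w b c * pword w (c :: t' ++ [a]) := by
        rw [show c :: t' ++ [a] = c :: (t' ++ [a]) by simp]
        rfl
      rw [h2, ih (by simp) a, getLastD_cons_cons, pword]
      ring

lemma pword_nonneg {S : Finset ℕ} {w : ℕ → ℕ → ℝ} (hw : ∀ a ∈ S, ∀ b ∈ S, 0 ≤ w a b) :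
    ∀ σ : List ℕ, (∀ x ∈ σ, x ∈ S) → 0 ≤ pword w σ := by
  intro σ
  induction σ with
  | nil => intro _; norm_num [pword]
  | cons a t ih =>
    cases t with
    | nil => intro _; norm_num [pword]
    | cons b t' =>
      intro hx
      have h1 : pword w (a :: b :: t') = w a b * pword w (b :: t') := rfl
      rw [h1]
      exact mul_nonneg (hw a (hx a (by simp)) b (hx b (by simp)))
        (ih fun x h => hx x (by simp [h]))

lemma pword_ne_zero_chain' {w : ℕ → ℕ → ℝ} :
    ∀ σ : List ℕ, pword w σ ≠ 0 → σ.Chain' (fun a b => w a b ≠ 0) := by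
  intro σ
  induction σ with
  | nil => intro _; exact List.IsChain.nil
  | cons a t ih =>
    cases t with
    | nil => intro _; exact List.IsChain.singleton a
    | cons b t' =>
      intro h
      have h1 : pword w (a :: b :: t') = w a b * pword w (b :: t') := rfl
      rw [h1, mul_ne_zero_iff] at h
      exact List.isChain_cons_cons.2 ⟨h.1, ih h.2⟩

lemma chain'_transfer {R R' : ℕ → ℕ → Prop} {S : Finset ℕ}
    (h : ∀ a ∈ S, ∀ b ∈ S, R a b → R' a b) :
    ∀ σ : List ℕ, (∀ x ∈ σ, x ∈ S) → σ.Chain' R → σ.Chain' R' := by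
  intro σ
  induction σ with
  | nil => intro _ _; exact List.IsChain.nil
  | cons a t ih =>
    cases t with
    | nil => intro _ _; exact List.IsChain.singleton a
    | cons b t' =>
      intro hx hc
      simp only [List.Chain', List.isChain_cons_cons] at hc ⊢
      exact ⟨h a (hx a (by simp)) b (hx b (by simp)) hc.1,
        ih (fun x h' => hx x (by simp [h'])) hc.2⟩

lemma sum_Ext {S : Finset ℕ} {w : ℕ → ℕ → ℝ}
    (hst : ∀ i ∈ S, ∑ j ∈ S, w i j = 1) :
    ∀ (k : ℕ) (σ : List ℕ), σ ≠ [] → (∀ x ∈ σ, x ∈ S) →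
      ∑ τ ∈ Ext S k σ, pword w τ = pword w σ := by
  intro k
  induction k with
  | zero => intro σ _ _; simp [Ext]
  | succ k ih =>
    intro σ hσ hσS
    have hdisj : (↑(Ext S k σ) : Set (List ℕ)).PairwiseDisjoint
        (fun τ => S.image fun a => τ ++ [a]) := by
      intro τ1 h1 τ2 h2 hne
      simp only [Function.onFun, Finset.disjoint_left]
      intro ρ hρ1 hρ2
      simp only [Finset.mem_image] at hρ1 hρ2
      obtain ⟨a, _, rfl⟩ := hρ1
      obtain ⟨b, _, hab⟩ := hρ2
      have hlen : τ1.length = τ2.length := by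
        rw [Ext_length (S := S) h1, Ext_length (S := S) h2]
      exact hne ((List.append_inj hab hlen.symm).1.symm)
    rw [show Ext S (k+1) σ = (Ext S k σ).biUnion fun τ => S.image fun a => τ ++ [a] from rfl,
      Finset.sum_biUnion hdisj]
    rw [← ih σ hσ hσS]
    refine Finset.sum_congr rfl fun τ hτ => ?_
    obtain ⟨l, hlS, hlen, rfl⟩ := mem_Ext.1 hτ
    have hτne : σ ++ l ≠ [] := by simp [hσ]
    have hτS : ∀ x ∈ σ ++ l, x ∈ S := by
      intro x hx
      rcases List.mem_append.1 hx with h | h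
      · exact hσS x h
      · exact hlS x h
    have hinj : Set.InjOn (fun a => (σ ++ l) ++ [a]) ↑S := by
      intro a _ b _ hab
      simpa using List.append_inj hab rfl |>.2
    rw [Finset.sum_image hinj]
    have hlast : (σ ++ l).getLastD 0 ∈ S := hτS _ (getLastD_mem hτne)
    calc ∑ a ∈ S, pword w ((σ ++ l) ++ [a])
        = ∑ a ∈ S, pword w (σ ++ l) * w ((σ ++ l).getLastD 0) a :=
          Finset.sum_congr rfl fun a _ => pword_snoc w (σ ++ l) hτne a
    _ = pword w (σ ++ l) * ∑ a ∈ S, w ((σ ++ l).getLastD 0) a := by rw [Finset.mul_sum]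
    _ = pword w (σ ++ l) := by rw [hst _ hlast, mul_one]


lemma seqTake_length (x : ℕ → ℕ) (n : ℕ) : (seqTake x n).length = n := by
  simp [seqTake]

lemma seqTake_eq_take {x : ℕ → ℕ} {τ : List ℕ}
    (h : ∀ i, i < τ.length → x i = τ.getD i 0) {n : ℕ} (hn : n ≤ τ.length) :
    seqTake x n = τ.take n := by
  apply List.ext_getElem
  · simp [seqTake_length, hn]
  · intro i h1 h2
    rw [seqTake_length] at h1
    simp only [seqTake, List.getElem_map, List.getElem_range]
    rw [List.getElem_take]
    rw [h i (by omega), List.getD_eq_getElem τ 0 (by omega)]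

lemma seqTake_headD {x : ℕ → ℕ} {n : ℕ} (hn : 1 ≤ n) : (seqTake x n).headD 0 = x 0 := by
  cases n with
  | zero => omega
  | succ m => simp [seqTake, List.range_succ_eq_map]

lemma antichain_mass
    (S : Finset ℕ) (w : ℕ → ℕ → ℝ) (E : ℕ → ℕ → Prop)
    (hw : ∀ a ∈ S, ∀ b ∈ S, 0 ≤ w a b)
    (hE : ∀ a ∈ S, ∀ b ∈ S, (0 < w a b ↔ E a b))
    (hst : ∀ i ∈ S, ∑ j ∈ S, w i j = 1)
    (hsucc : ∀ i ∈ S, ∃ j ∈ S, 0 < w i j)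
    (roots : Finset ℕ) (hroots : roots ⊆ S)
    (Γ : Finset (List ℕ))
    (hΓ : ∀ σ ∈ Γ, σ ≠ [] ∧ (∀ x ∈ σ, x ∈ S) ∧ σ.Chain' E)
    (hheads : ∀ σ ∈ Γ, σ.headD 0 ∈ roots)
    (hanti : ∀ σ ∈ Γ, ∀ τ ∈ Γ, σ ≠ τ → ¬ σ <+: τ)
    (hmax : ∀ x : ℕ → ℕ, x 0 ∈ roots → (∀ n, x n ∈ S) → (∀ n, E (x n) (x (n+1))) →
      ∃ n, 1 ≤ n ∧ seqTake x n ∈ Γ) :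
    ∑ σ ∈ Γ, pword w σ = roots.card := by
  classical
  set M := max (Γ.sup List.length) 1 with hMdef
  have hM1 : 1 ≤ M := le_max_right _ _
  have hMσ : ∀ σ ∈ Γ, σ.length ≤ M := fun σ h => le_max_of_le_left (Finset.le_sup h)
  obtain ⟨f, hf⟩ : ∃ f : ℕ → ℕ, ∀ i ∈ S, f i ∈ S ∧ 0 < w i (f i) := by
    choose g hg1 hg2 using hsucc
    exact ⟨fun i => if h : i ∈ S then g i h else 0,
      fun i hi => by simp only [dif_pos hi]; exact ⟨hg1 i hi, hg2 i hi⟩⟩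
  have hroot : ∀ j ∈ roots,
      ∑ σ ∈ Γ.filter (fun σ => σ.headD 0 = j), pword w σ = 1 := by
    intro j hj
    have hjS : j ∈ S := hroots hj
    set Γj := Γ.filter (fun σ => σ.headD 0 = j) with hΓjdef
    have hLev : ∑ τ ∈ Ext S (M-1) [j], pword w τ = 1 := by
      rw [sum_Ext hst (M-1) [j] (by simp) (by simpa using hjS)]
      rfl
    have hdisj : (↑Γj : Set (List ℕ)).PairwiseDisjoint
        (fun σ => Ext S (M - σ.length) σ) := by
      intro σ1 h1 σ2 h2 hne
      rw [Function.onFun, Finset.disjoint_left]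
      intro τ hτ1 hτ2
      have hG1 : σ1 ∈ Γ := (Finset.mem_filter.1 (Finset.mem_coe.1 h1)).1
      have hG2 : σ2 ∈ Γ := (Finset.mem_filter.1 (Finset.mem_coe.1 h2)).1
      rcases List.prefix_or_prefix_of_prefix (Ext_prefix hτ1) (Ext_prefix hτ2) with h | h
      · exact hanti σ1 hG1 σ2 hG2 hne h
      · exact hanti σ2 hG2 σ1 hG1 (Ne.symm hne) h
    have hsub : Γj.biUnion (fun σ => Ext S (M - σ.length) σ) ⊆ Ext S (M-1) [j] := by
      intro τ hτ
      obtain ⟨σ, hσ, hτσ⟩ := Finset.mem_biUnion.1 hτ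
      have hσΓ : σ ∈ Γ := (Finset.mem_filter.1 hσ).1
      have hhead : σ.headD 0 = j := (Finset.mem_filter.1 hσ).2
      obtain ⟨hσne, hσS, _⟩ := hΓ σ hσΓ
      obtain ⟨l, hlS, hlen, rfl⟩ := mem_Ext.1 hτσ
      obtain ⟨a, t, rfl⟩ : ∃ a t, σ = a :: t := by
        cases σ with
        | nil => exact absurd rfl hσne
        | cons a t => exact ⟨a, t, rfl⟩
      have ha : a = j := by simpa using hhead
      refine mem_Ext.2 ⟨t ++ l, ?_, ?_, by simp [ha]⟩
      · intro x hx
        rcases List.mem_append.1 hx with h | h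
        · exact hσS x (by simp [h])
        · exact hlS x h
      · have h1 : (a :: t).length ≤ M := hMσ _ hσΓ
        simp only [List.length_cons] at h1 hlen
        simp only [List.length_append]
        omega
    have hvanish : ∀ τ ∈ Ext S (M-1) [j],
        τ ∉ Γj.biUnion (fun σ => Ext S (M - σ.length) σ) → pword w τ = 0 := by
      intro τ hτLev hτnot
      by_contra hpw
      obtain ⟨l, hlS, hlen, rfl⟩ := mem_Ext.1 hτLev
      set τ0 : List ℕ := [j] ++ l with hτ0def
      have hτS : ∀ x ∈ τ0, x ∈ S := by
        intro x hx
        rcases List.mem_append.1 hx with h | h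
        · rw [List.mem_singleton] at h; subst h; exact hjS
        · exact hlS x h
      have hτlen : τ0.length = M := by
        simp only [hτ0def, List.length_append, List.length_singleton, hlen]
        omega
      have hchainE : τ0.Chain' E := by
        refine chain'_transfer (fun a ha b hb hR => (hE a ha b hb).1 ?_) τ0 hτS
          (pword_ne_zero_chain' τ0 hpw)
        exact lt_of_le_of_ne (hw a ha b hb) (Ne.symm hR)
      set x : ℕ → ℕ := fun n =>
        Nat.rec (τ0.getD 0 0) (fun n xn => if n + 1 < M then τ0.getD (n+1) 0 else f xn) n
        with hxdef
      have hx0 : x 0 = τ0.getD 0 0 := rfl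
      have hxsucc : ∀ n, x (n+1) = if n + 1 < M then τ0.getD (n+1) 0 else f (x n) :=
        fun n => rfl
      have hxlt : ∀ n, n < M → x n = τ0.getD n 0 := by
        intro n hn
        cases n with
        | zero => exact hx0
        | succ m => rw [hxsucc, if_pos hn]
      have hgetS : ∀ n, n < τ0.length → τ0.getD n 0 ∈ S := by
        intro n h
        rw [List.getD_eq_getElem τ0 0 h]
        exact hτS _ (List.getElem_mem h)
      have hxS : ∀ n, x n ∈ S := by
        intro n
        induction n with
        | zero => rw [hx0]; exact hgetS 0 (by omega)
        | succ n ih =>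
          rw [hxsucc]
          split
          · exact hgetS _ (by omega)
          · exact (hf _ ih).1
      have hxE : ∀ n, E (x n) (x (n+1)) := by
        intro n
        by_cases hn : n + 1 < M
        · have hb1 : n < τ0.length := by omega
          have hb2 : n + 1 < τ0.length := by omega
          have hc := List.isChain_iff_getElem.1 hchainE n (by omega)
          rw [hxlt n (by omega), hxlt _ hn, List.getD_eq_getElem τ0 0 hb1,
            List.getD_eq_getElem τ0 0 hb2]
          simpa [List.get_eq_getElem] using hc
        · rw [hxsucc, if_neg hn]
          exact (hE _ (hxS n) _ (hf _ (hxS n)).1).1 (hf _ (hxS n)).2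
      have hx0r : x 0 ∈ roots := by
        have : τ0.getD 0 0 = j := by simp [hτ0def]
        rw [hx0, this]; exact hj
      obtain ⟨n, hn1, hnΓ⟩ := hmax x hx0r hxS hxE
      have hnM : n ≤ M := by
        have := hMσ _ hnΓ
        rwa [seqTake_length] at this
      have htake : seqTake x n = τ0.take n :=
        seqTake_eq_take (fun i hi => hxlt i (by omega)) (by omega)
      apply hτnot
      refine Finset.mem_biUnion.2 ⟨seqTake x n, ?_, ?_⟩
      · refine Finset.mem_filter.2 ⟨hnΓ, ?_⟩
        rw [seqTake_headD hn1, hx0]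
        simp [hτ0def]
      · rw [htake]
        have hlen' : (τ0.take n).length = n := by
          rw [List.length_take]; omega
        refine mem_Ext.2 ⟨τ0.drop n, fun y hy => hτS y (List.mem_of_mem_drop hy), ?_, ?_⟩
        · rw [List.length_drop, hlen', hτlen]
        · rw [List.take_append_drop]
    have hkey := Finset.sum_subset hsub hvanish
    rw [Finset.sum_biUnion hdisj] at hkey
    have hinner : ∀ σ ∈ Γj, ∑ τ ∈ Ext S (M - σ.length) σ, pword w τ = pword w σ := by
      intro σ hσ
      have hσΓ : σ ∈ Γ := (Finset.mem_filter.1 hσ).1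
      exact sum_Ext hst _ σ (hΓ σ hσΓ).1 (hΓ σ hσΓ).2.1
    calc ∑ σ ∈ Γj, pword w σ = ∑ σ ∈ Γj, ∑ τ ∈ Ext S (M - σ.length) σ, pword w τ :=
      (Finset.sum_congr rfl hinner).symm
    _ = ∑ τ ∈ Ext S (M-1) [j], pword w τ := hkey
    _ = 1 := hLev
  rw [← Finset.sum_fiberwise_of_maps_to hheads (pword w)]
  rw [Finset.sum_congr rfl hroot, Finset.sum_const, nsmul_eq_mul, mul_one]




lemma pword_nonneg' {p : ℕ → ℕ → ℝ} (hp : ∀ a b, 0 ≤ p a b) :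
    ∀ σ : List ℕ, 0 ≤ pword p σ := by
  intro σ
  induction σ with
  | nil => norm_num [pword]
  | cons a t ih =>
    cases t with
    | nil => norm_num [pword]
    | cons b t' =>
      have h1 : pword p (a :: b :: t') = p a b * pword p (b :: t') := rfl
      rw [h1]
      exact mul_nonneg (hp a b) ih

lemma sword_pos {p sr : ℕ → ℕ → ℝ} (hsr : ∀ a b, 0 < p a b → 0 < sr a b) :
    ∀ σ : List ℕ, σ.Chain' (edge p) → 0 < sword sr σ := by
  intro σ
  induction σ with
  | nil => intro _; norm_num [sword]
  | cons a t ih =>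
    cases t with
    | nil => intro _; norm_num [sword]
    | cons b t' =>
      intro hc
      simp only [List.Chain', List.isChain_cons_cons] at hc
      have h1 : sword sr (a :: b :: t') = sr a b * sword sr (b :: t') := rfl
      rw [h1]
      exact mul_pos (hsr a b hc.1) (ih hc.2)

lemma pword_rpow {p sr : ℕ → ℕ → ℝ} (t r : ℝ) (hp : ∀ a b, 0 ≤ p a b)
    (hsr : ∀ a b, 0 < p a b → 0 < sr a b) :
    ∀ σ : List ℕ, σ.Chain' (edge p) →
      (pword p σ * sword sr σ ^ r) ^ t =
        pword (fun a b => (p a b * sr a b ^ r) ^ t) σ := by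
  intro σ
  induction σ with
  | nil => intro _; norm_num [pword, sword]
  | cons a t ih =>
    cases t with
    | nil => intro _; norm_num [pword, sword]
    | cons b t' =>
      intro hc
      simp only [List.Chain', List.isChain_cons_cons] at hc
      have hsw : 0 < sword sr (b :: t') := sword_pos hsr _ hc.2
      have hpw : 0 ≤ pword p (b :: t') := pword_nonneg' hp _
      have h1 : pword p (a :: b :: t') = p a b * pword p (b :: t') := rfl
      have h2 : sword sr (a :: b :: t') = sr a b * sword sr (b :: t') := rfl
      have h3 : pword (fun a b => (p a b * sr a b ^ r) ^ t) (a :: b :: t') =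
          (p a b * sr a b ^ r) ^ t * pword (fun a b => (p a b * sr a b ^ r) ^ t) (b :: t') :=
        rfl
      rw [h1, h2, h3, ← ih hc.2]
      have hsab : 0 < sr a b := hsr a b hc.1
      rw [Real.mul_rpow hsab.le hsw.le]
      rw [show p a b * pword p (b :: t') * (sr a b ^ r * sword sr (b :: t') ^ r) =
        (p a b * sr a b ^ r) * (pword p (b :: t') * sword sr (b :: t') ^ r) by ring]
      rw [Real.mul_rpow (mul_nonneg (hp a b) (Real.rpow_nonneg hsab.le r))
        (mul_nonneg hpw (Real.rpow_nonneg hsw.le r))]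

lemma pword_telescope {w : ℕ → ℕ → ℝ} {v : ℕ → ℝ} {lam : ℝ} (hlam : 0 < lam) :
    ∀ σ : List ℕ, σ ≠ [] → (∀ x ∈ σ, 0 < v x) →
      pword w σ * v (σ.getLastD 0) =
        pword (fun a b => w a b * v b / (lam * v a)) σ * lam ^ (σ.length - 1) *
          v (σ.headD 0) := by
  intro σ
  induction σ with
  | nil => intro h; exact absurd rfl h
  | cons a t ih =>
    cases t with
    | nil => intro _ _; simp [pword, List.getLastD]
    | cons b t' =>
      intro _ hv
      have hva : 0 < v a := hv a (by simp)
      have hvb : 0 < v b := hv b (by simp)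
      have hIH := ih (by simp) (fun x hx => hv x (by simp [hx]))
      have h1 : pword w (a :: b :: t') = w a b * pword w (b :: t') := rfl
      have h3 : pword (fun a b => w a b * v b / (lam * v a)) (a :: b :: t') =
          (w a b * v b / (lam * v a)) *
            pword (fun a b => w a b * v b / (lam * v a)) (b :: t') := rfl
      rw [h1, h3, getLastD_cons_cons]
      have hlen1 : (b :: t').length - 1 = t'.length := by simp
      have hlen2 : (a :: b :: t').length - 1 = t'.length + 1 := by simp
      rw [hlen2]
      have hhead : (b :: t').headD 0 = b := rfl
      rw [hlen1, hhead] at hIH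
      have hexp : lam ^ (t'.length + 1) = lam ^ t'.length * lam := pow_succ lam t'.length
      rw [hexp]
      have hhd : (a :: b :: t').headD 0 = a := rfl
      rw [hhd]
      calc w a b * pword w (b :: t') * v ((b :: t').getLastD 0)
          = w a b * (pword w (b :: t') * v ((b :: t').getLastD 0)) := by ring
        _ = w a b * (pword (fun a b => w a b * v b / (lam * v a)) (b :: t') *
              lam ^ t'.length * v b) := by rw [hIH]
        _ = w a b * v b / (lam * v a) *
              pword (fun a b => w a b * v b / (lam * v a)) (b :: t') *
              (lam ^ t'.length * lam) * v a := by
            field_simp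




lemma antichain_bounds
    (S : Finset ℕ) (hS : S.Nonempty)
    (p sr : ℕ → ℕ → ℝ) (r t : ℝ) (ht : 0 < t)
    (hp0 : ∀ a b, 0 ≤ p a b)
    (hsrp : ∀ a b, 0 < p a b → 0 < sr a b)
    (v : ℕ → ℝ) (lam : ℝ) (hlam : 0 < lam)
    (hv : ∀ a ∈ S, 0 < v a)
    (heig : ∀ a ∈ S, ∑ b ∈ S, (p a b * sr a b ^ r) ^ t * v b = lam * v a)
    (roots : Finset ℕ) (hroots : roots ⊆ S) (hrne : roots.Nonempty)
    (Γ : Finset (List ℕ))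
    (hΓ : ∀ σ ∈ Γ, σ ≠ [] ∧ (∀ x ∈ σ, x ∈ S) ∧ σ.Chain' (edge p))
    (hheads : ∀ σ ∈ Γ, σ.headD 0 ∈ roots)
    (hanti : ∀ σ ∈ Γ, ∀ τ ∈ Γ, σ ≠ τ → ¬ σ <+: τ)
    (hmax : ∀ x : ℕ → ℕ, x 0 ∈ roots → (∀ n, x n ∈ S) → (∀ n, edge p (x n) (x (n+1))) →
      ∃ n, 1 ≤ n ∧ seqTake x n ∈ Γ) :
    (1 ≤ lam →
      S.inf' hS v / (S.sup' hS v * lam) * lam ^ minLen Γ ≤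
          ∑ σ ∈ Γ, (pword p σ * sword sr σ ^ r) ^ t ∧
        ∑ σ ∈ Γ, (pword p σ * sword sr σ ^ r) ^ t ≤
          S.sup' hS v * S.card / (S.inf' hS v * lam) * lam ^ maxLen Γ) ∧
    (lam ≤ 1 →
      S.inf' hS v / (S.sup' hS v * lam) * lam ^ maxLen Γ ≤
          ∑ σ ∈ Γ, (pword p σ * sword sr σ ^ r) ^ t ∧
        ∑ σ ∈ Γ, (pword p σ * sword sr σ ^ r) ^ t ≤
          S.sup' hS v * S.card / (S.inf' hS v * lam) * lam ^ minLen Γ) := by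
  classical
  set w : ℕ → ℕ → ℝ := fun a b => (p a b * sr a b ^ r) ^ t with hwdef
  set m := S.inf' hS v with hmdef
  set Mv := S.sup' hS v with hMvdef
  obtain ⟨a0, ha0⟩ := id hS
  have hmpos : 0 < m := by
    rw [hmdef, Finset.lt_inf'_iff]
    exact fun a ha => hv a ha
  have hMvpos : 0 < Mv := lt_of_lt_of_le (hv a0 ha0) (Finset.le_sup' v ha0)
  have hmle : ∀ a ∈ S, m ≤ v a := fun a ha => Finset.inf'_le v ha
  have hMvge : ∀ a ∈ S, v a ≤ Mv := fun a ha => Finset.le_sup' v ha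
  have hwnn : ∀ a b, 0 ≤ w a b := by
    intro a b
    rcases (hp0 a b).lt_or_eq with h | h
    · exact (Real.rpow_pos_of_pos (mul_pos h (Real.rpow_pos_of_pos (hsrp a b h) r)) t).le
    · simp [hwdef, ← h, Real.zero_rpow ht.ne']
  have hwiff : ∀ a b, (0 < w a b ↔ 0 < p a b) := by
    intro a b
    constructor
    · intro h
      rcases (hp0 a b).lt_or_eq with h' | h'
      · exact h'
      · rw [hwdef] at h
        simp only [← h', zero_mul, Real.zero_rpow ht.ne'] at h
        exact absurd h (lt_irrefl 0)
    · intro h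
      exact Real.rpow_pos_of_pos (mul_pos h (Real.rpow_pos_of_pos (hsrp a b h) r)) t
  set q : ℕ → ℕ → ℝ := fun a b => w a b * v b / (lam * v a) with hqdef
  have hqnn : ∀ a ∈ S, ∀ b ∈ S, 0 ≤ q a b := fun a ha b hb =>
    div_nonneg (mul_nonneg (hwnn a b) (hv b hb).le) (mul_nonneg hlam.le (hv a ha).le)
  have hqiff : ∀ a ∈ S, ∀ b ∈ S, (0 < q a b ↔ edge p a b) := by
    intro a ha b hb
    rw [hqdef]
    simp only []
    rw [div_pos_iff]
    constructor
    · rintro (⟨h1, _⟩ | ⟨_, h2⟩)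
      · exact (hwiff a b).1 (by nlinarith [hv b hb, hwnn a b])
      · exact absurd (mul_pos hlam (hv a ha)) (by linarith)
    · intro h
      exact Or.inl ⟨mul_pos ((hwiff a b).2 h) (hv b hb), mul_pos hlam (hv a ha)⟩
  have hqst : ∀ i ∈ S, ∑ j ∈ S, q i j = 1 := by
    intro i hi
    rw [hqdef]
    simp only []
    rw [← Finset.sum_div, heig i hi, div_self (mul_pos hlam (hv i hi)).ne']
  have hqsucc : ∀ i ∈ S, ∃ j ∈ S, 0 < q i j := by
    intro i hi
    have h1 : ∑ j ∈ S, q i j = 1 := hqst i hi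
    obtain ⟨j, hj, hne⟩ := Finset.exists_ne_zero_of_sum_ne_zero (h1 ▸ one_ne_zero)
    exact ⟨j, hj, lt_of_le_of_ne (hqnn i hi j hj) (Ne.symm hne)⟩
  have hmass := antichain_mass S q (edge p) hqnn hqiff hqst hqsucc roots hroots Γ hΓ
    hheads hanti hmax
  -- Γ is nonempty
  have hΓne : Γ.Nonempty := by
    by_contra h
    rw [Finset.not_nonempty_iff_eq_empty] at h
    rw [h, Finset.sum_empty] at hmass
    have : 0 < roots.card := Finset.card_pos.2 hrne
    have : (0:ℝ) < roots.card := by exact_mod_cast this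
    linarith
  obtain ⟨σ0, hσ0⟩ := hΓne
  have hlen1 : ∀ σ ∈ Γ, 1 ≤ σ.length := fun σ h =>
    List.length_pos_iff.2 (hΓ σ h).1
  have hlsne : {n | ∃ σ ∈ Γ, σ.length = n}.Nonempty := ⟨σ0.length, σ0, hσ0, rfl⟩
  have hlsbdd : BddAbove {n | ∃ σ ∈ Γ, σ.length = n} := by
    refine ⟨Γ.sup List.length, ?_⟩
    rintro n ⟨σ, hσ, rfl⟩
    exact Finset.le_sup hσ
  have hminle : ∀ σ ∈ Γ, minLen Γ ≤ σ.length := fun σ h => Nat.sInf_le ⟨σ, h, rfl⟩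
  have hmaxge : ∀ σ ∈ Γ, σ.length ≤ maxLen Γ := fun σ h => le_csSup hlsbdd ⟨σ, h, rfl⟩
  have hmin1 : 1 ≤ minLen Γ := by
    obtain ⟨σ, hσ, hlen⟩ := Nat.sInf_mem hlsne
    rw [minLen, ← hlen]
    exact hlen1 σ hσ
  have hmax1 : 1 ≤ maxLen Γ := le_trans (hlen1 σ0 hσ0) (hmaxge σ0 hσ0)
  -- rewrite the target sum
  have hsum : ∑ σ ∈ Γ, (pword p σ * sword sr σ ^ r) ^ t = ∑ σ ∈ Γ, pword w σ :=
    Finset.sum_congr rfl fun σ hσ => pword_rpow t r hp0 hsrp σ (hΓ σ hσ).2.2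
  -- per-word two-sided bound
  have htel : ∀ σ ∈ Γ,
      m / Mv * (pword q σ * lam ^ (σ.length - 1)) ≤ pword w σ ∧
        pword w σ ≤ Mv / m * (pword q σ * lam ^ (σ.length - 1)) := by
    intro σ hσ
    obtain ⟨hne, hmemS, _⟩ := hΓ σ hσ
    have hvσ : ∀ x ∈ σ, 0 < v x := fun x hx => hv x (hmemS x hx)
    have htele := pword_telescope (w := w) (v := v) hlam σ hne hvσ
    have hheadS : σ.headD 0 ∈ S := hmemS _ (by
      cases σ with
      | nil => exact absurd rfl hne
      | cons a l => simp)
    have hlastS : σ.getLastD 0 ∈ S := hmemS _ (getLastD_mem hne)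
    set K := pword q σ * lam ^ (σ.length - 1) with hK
    have hqσnn : 0 ≤ pword q σ := pword_nonneg hqnn σ hmemS
    have hKnn : 0 ≤ K := mul_nonneg hqσnn (pow_pos hlam _).le
    have hw_eq : pword w σ = K * v (σ.headD 0) / v (σ.getLastD 0) := by
      rw [eq_div_iff (hv _ hlastS).ne']
      rw [htele]
    constructor
    · rw [hw_eq]
      have h1 : m / Mv * K = K * m / Mv := by ring
      rw [h1]
      exact div_le_div₀ (mul_nonneg hKnn (hv _ hheadS).le)
        (mul_le_mul_of_nonneg_left (hmle _ hheadS) hKnn) (hv _ hlastS) (hMvge _ hlastS)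
    · rw [hw_eq]
      have h1 : Mv / m * K = K * Mv / m := by ring
      rw [h1]
      exact div_le_div₀ (mul_nonneg hKnn hMvpos.le)
        (mul_le_mul_of_nonneg_left (hMvge _ hheadS) hKnn) hmpos (hmle _ hlastS)
  have hqnn' : ∀ σ ∈ Γ, 0 ≤ pword q σ := fun σ hσ => pword_nonneg hqnn σ (hΓ σ hσ).2.1
  have hcard1 : (1:ℝ) ≤ roots.card := by
    have : 0 < roots.card := Finset.card_pos.2 hrne
    exact_mod_cast this
  have hcardS : (roots.card : ℝ) ≤ S.card := by
    exact_mod_cast Finset.card_le_card hroots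
  constructor
  · intro hlam1
    constructor
    · -- lower bound, lam ≥ 1
      rw [hsum]
      have h1 : ∀ σ ∈ Γ, m / Mv * (pword q σ * lam ^ (minLen Γ - 1)) ≤ pword w σ := by
        intro σ hσ
        refine le_trans ?_ (htel σ hσ).1
        have : lam ^ (minLen Γ - 1) ≤ lam ^ (σ.length - 1) :=
          pow_le_pow_right₀ hlam1 (by have := hminle σ hσ; omega)
        have h2 := mul_le_mul_of_nonneg_left this (hqnn' σ hσ)
        nlinarith [div_nonneg hmpos.le hMvpos.le]
      calc m / (Mv * lam) * lam ^ minLen Γ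
          = m / Mv * lam ^ (minLen Γ - 1) := by
            rw [show minLen Γ = (minLen Γ - 1) + 1 by omega, pow_succ]
            field_simp
            simp
      _ ≤ m / Mv * lam ^ (minLen Γ - 1) * roots.card :=
            le_mul_of_one_le_right
              (mul_nonneg (div_nonneg hmpos.le hMvpos.le) (pow_pos hlam _).le) hcard1
      _ = ∑ σ ∈ Γ, m / Mv * (pword q σ * lam ^ (minLen Γ - 1)) := by
            rw [← hmass, Finset.mul_sum]
            refine Finset.sum_congr rfl fun σ _ => by ring
      _ ≤ ∑ σ ∈ Γ, pword w σ := Finset.sum_le_sum h1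
    · -- upper bound, lam ≥ 1
      rw [hsum]
      have h1 : ∀ σ ∈ Γ, pword w σ ≤ Mv / m * (pword q σ * lam ^ (maxLen Γ - 1)) := by
        intro σ hσ
        refine le_trans (htel σ hσ).2 ?_
        have : lam ^ (σ.length - 1) ≤ lam ^ (maxLen Γ - 1) :=
          pow_le_pow_right₀ hlam1 (by have := hmaxge σ hσ; omega)
        have h2 := mul_le_mul_of_nonneg_left this (hqnn' σ hσ)
        nlinarith [div_nonneg hMvpos.le hmpos.le]
      calc ∑ σ ∈ Γ, pword w σ ≤ ∑ σ ∈ Γ, Mv / m * (pword q σ * lam ^ (maxLen Γ - 1)) :=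
            Finset.sum_le_sum h1
      _ = Mv / m * lam ^ (maxLen Γ - 1) * roots.card := by
            rw [← hmass, Finset.mul_sum]
            refine Finset.sum_congr rfl fun σ _ => by ring
      _ ≤ Mv / m * lam ^ (maxLen Γ - 1) * S.card :=
            mul_le_mul_of_nonneg_left hcardS
              (mul_nonneg (div_nonneg hMvpos.le hmpos.le) (pow_pos hlam _).le)
      _ = Mv * S.card / (m * lam) * lam ^ maxLen Γ := by
            rw [show maxLen Γ = (maxLen Γ - 1) + 1 by omega, pow_succ]
            field_simp
            simp
  · intro hlam1
    constructor
    · rw [hsum]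
      have h1 : ∀ σ ∈ Γ, m / Mv * (pword q σ * lam ^ (maxLen Γ - 1)) ≤ pword w σ := by
        intro σ hσ
        refine le_trans ?_ (htel σ hσ).1
        have : lam ^ (maxLen Γ - 1) ≤ lam ^ (σ.length - 1) :=
          pow_le_pow_of_le_one hlam.le hlam1 (by have := hmaxge σ hσ; omega)
        have h2 := mul_le_mul_of_nonneg_left this (hqnn' σ hσ)
        nlinarith [div_nonneg hmpos.le hMvpos.le]
      calc m / (Mv * lam) * lam ^ maxLen Γ
          = m / Mv * lam ^ (maxLen Γ - 1) := by
            rw [show maxLen Γ = (maxLen Γ - 1) + 1 by omega, pow_succ]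
            field_simp
            simp
      _ ≤ m / Mv * lam ^ (maxLen Γ - 1) * roots.card :=
            le_mul_of_one_le_right
              (mul_nonneg (div_nonneg hmpos.le hMvpos.le) (pow_pos hlam _).le) hcard1
      _ = ∑ σ ∈ Γ, m / Mv * (pword q σ * lam ^ (maxLen Γ - 1)) := by
            rw [← hmass, Finset.mul_sum]
            refine Finset.sum_congr rfl fun σ _ => by ring
      _ ≤ ∑ σ ∈ Γ, pword w σ := Finset.sum_le_sum h1
    · rw [hsum]
      have h1 : ∀ σ ∈ Γ, pword w σ ≤ Mv / m * (pword q σ * lam ^ (minLen Γ - 1)) := by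
        intro σ hσ
        refine le_trans (htel σ hσ).2 ?_
        have : lam ^ (σ.length - 1) ≤ lam ^ (minLen Γ - 1) :=
          pow_le_pow_of_le_one hlam.le hlam1 (by have := hminle σ hσ; omega)
        have h2 := mul_le_mul_of_nonneg_left this (hqnn' σ hσ)
        nlinarith [div_nonneg hMvpos.le hmpos.le]
      calc ∑ σ ∈ Γ, pword w σ ≤ ∑ σ ∈ Γ, Mv / m * (pword q σ * lam ^ (minLen Γ - 1)) :=
            Finset.sum_le_sum h1
      _ = Mv / m * lam ^ (minLen Γ - 1) * roots.card := by
            rw [← hmass, Finset.mul_sum]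
            refine Finset.sum_congr rfl fun σ _ => by ring
      _ ≤ Mv / m * lam ^ (minLen Γ - 1) * S.card :=
            mul_le_mul_of_nonneg_left hcardS
              (mul_nonneg (div_nonneg hMvpos.le hmpos.le) (pow_pos hlam _).le)
      _ = Mv * S.card / (m * lam) * lam ^ minLen Γ := by
            rw [show minLen Γ = (minLen Γ - 1) + 1 by omega, pow_succ]
            field_simp
            simp



lemma chain_map {R : ℕ → ℕ → Prop} {A : Matrix (Fin N) (Fin N) ℝ} {S : Finset ℕ}
    {F : ℕ → Fin N} (h : ∀ x ∈ S, ∀ y ∈ S, R x y → 0 < A (F x) (F y)) :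
    ∀ (l : List ℕ) (a : ℕ), a ∈ S → (∀ x ∈ l, x ∈ S) → List.Chain R a l →
      List.Chain (fun u v => 0 < A u v) (F a) (l.map F) := by
  intro l
  induction l with
  | nil => intro a _ _ _; exact List.IsChain.singleton (F a)
  | cons b t ih =>
    intro a ha hmem hc
    simp only [List.Chain, List.chain_cons] at hc
    rw [List.map_cons]; simp only [List.Chain, List.chain_cons]
    exact ⟨h a ha b (hmem b (by simp)) hc.1,
      ih b (hmem b (by simp)) (fun x hx => hmem x (by simp [hx])) hc.2⟩

lemma eig_transfer (S : Finset ℕ) (e : Fin N → ℕ) (d : ℕ → Fin N)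
    (he : ∀ j : Fin N, e j ∈ S) (hd : ∀ a ∈ S, e (d a) = a) (hde : ∀ j, d (e j) = j)
    (W : ℕ → ℕ → ℝ) (A : Matrix (Fin N) (Fin N) ℝ) (hA : ∀ i j, A i j = W (e i) (e j))
    (v : Fin N → ℝ) (lam : ℝ) (heig : A.mulVec v = lam • v) :
    ∀ a ∈ S, ∑ b ∈ S, W a b * v (d b) = lam * v (d a) := by
  intro a ha
  have h := congrFun heig (d a)
  rw [Matrix.mulVec, dotProduct, Pi.smul_apply, smul_eq_mul] at h
  rw [← h]
  refine Finset.sum_nbij' d e (fun b _ => Finset.mem_univ _) (fun j _ => he j)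
    (fun b hb => hd b hb) (fun j _ => hde j) ?_
  intro b hb
  rw [hA, hd a ha, hd b hb]

lemma case_bounds (hN : 0 < N) (p sr : ℕ → ℕ → ℝ) (r t : ℝ) (ht : 0 < t)
    (hp0 : ∀ a b, 0 ≤ p a b) (hsrp : ∀ a b, 0 < p a b → 0 < sr a b)
    (S : Finset ℕ) (e : Fin N → ℕ) (d : ℕ → Fin N)
    (he : ∀ j, e j ∈ S) (hd : ∀ a ∈ S, e (d a) = a) (hde : ∀ j, d (e j) = j)
    (A : Matrix (Fin N) (Fin N) ℝ)
    (hA : ∀ i j, A i j = (p (e i) (e j) * sr (e i) (e j) ^ r) ^ t)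
    (hirr : matIrred A) :
    ∃ c5 c6 : ℝ, 0 < c5 ∧ 0 < c6 ∧
      ∀ (roots : Finset ℕ), roots ⊆ S → roots.Nonempty →
      ∀ Γ : Finset (List ℕ),
        (∀ σ ∈ Γ, σ ≠ [] ∧ (∀ x ∈ σ, x ∈ S) ∧ σ.Chain' (edge p)) →
        (∀ σ ∈ Γ, σ.headD 0 ∈ roots) →
        (∀ σ ∈ Γ, ∀ τ ∈ Γ, σ ≠ τ → ¬ σ <+: τ) →
        (∀ x : ℕ → ℕ, x 0 ∈ roots → (∀ n, x n ∈ S) → (∀ n, edge p (x n) (x (n+1))) →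
          ∃ n, 1 ≤ n ∧ seqTake x n ∈ Γ) →
        (1 ≤ specRad A →
          c5 * specRad A ^ minLen Γ ≤ ∑ σ ∈ Γ, (pword p σ * sword sr σ ^ r) ^ t ∧
          ∑ σ ∈ Γ, (pword p σ * sword sr σ ^ r) ^ t ≤ c6 * specRad A ^ maxLen Γ) ∧
        (specRad A ≤ 1 →
          c5 * specRad A ^ maxLen Γ ≤ ∑ σ ∈ Γ, (pword p σ * sword sr σ ^ r) ^ t ∧
          ∑ σ ∈ Γ, (pword p σ * sword sr σ ^ r) ^ t ≤ c6 * specRad A ^ minLen Γ) := by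
  classical
  have hS : S.Nonempty := ⟨e ⟨0, hN⟩, he _⟩
  have hAnn : ∀ i j, 0 ≤ A i j := by
    intro i j
    rw [hA]
    rcases (hp0 (e i) (e j)).lt_or_eq with h | h
    · exact (Real.rpow_pos_of_pos (mul_pos h (Real.rpow_pos_of_pos (hsrp _ _ h) r)) t).le
    · simp [← h, Real.zero_rpow ht.ne']
  obtain ⟨v, hvpos, heig⟩ := perron hN A hAnn hirr
  have hlampos : 0 < cwLam A := cw_pos hN A hAnn hirr
  have hspec : specRad A = cwLam A := specRad_eq_cwLam hN A hAnn hirr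
  set lam := cwLam A with hlamdef
  set vv : ℕ → ℝ := fun a => v (d a) with hvvdef
  have hvv : ∀ a ∈ S, 0 < vv a := fun a _ => hvpos (d a)
  have heigN : ∀ a ∈ S, ∑ b ∈ S, (p a b * sr a b ^ r) ^ t * vv b = lam * vv a :=
    eig_transfer S e d he hd hde _ A (fun i j => hA i j) v lam heig
  refine ⟨S.inf' hS vv / (S.sup' hS vv * lam), S.sup' hS vv * S.card / (S.inf' hS vv * lam),
    ?_, ?_, ?_⟩
  · apply div_pos
    · rw [Finset.lt_inf'_iff]; exact fun a ha => hvv a ha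
    · apply mul_pos _ hlampos
      obtain ⟨a0, ha0⟩ := hS
      exact lt_of_lt_of_le (hvv a0 ha0) (Finset.le_sup' vv ha0)
  · apply div_pos
    · apply mul_pos
      · obtain ⟨a0, ha0⟩ := hS
        exact lt_of_lt_of_le (hvv a0 ha0) (Finset.le_sup' vv ha0)
      · have : 0 < S.card := Finset.card_pos.2 hS
        exact_mod_cast this
    · apply mul_pos _ hlampos
      rw [Finset.lt_inf'_iff]; exact fun a ha => hvv a ha
  intro roots hroots hrne Γ hΓ hheads hanti hmax
  have hb := antichain_bounds S hS p sr r t ht hp0 hsrp vv lam hlampos hvv heigN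
    roots hroots hrne Γ hΓ hheads hanti hmax
  rw [hspec]
  exact hb


lemma headD_mem {σ : List ℕ} (h : σ ≠ []) : σ.headD 0 ∈ σ := by
  cases σ with
  | nil => exact absurd rfl h
  | cons a t => simp


end Aux

/-- **Lemma 4.1.** Assume (A1)–(A3) and fix `s > 0`. For each `i ∈ {1,2}` there are
constants `c₅(s), c₆(s) > 0`, independent of the antichain, such that for every finite
maximal antichain `Γ` in `H_i^*` or in `H_i^*(j)`:
if `s ≤ s_{i,r}` then `c₅ ρ_i(s)^{l(Γ)} ≤ Σ_{σ∈Γ} (p_σ s_σ^r)^{s/(s+r)} ≤ c₆ ρ_i(s)^{L(Γ)}`,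
and if `s > s_{i,r}` then `c₅ ρ_i(s)^{L(Γ)} ≤ Σ_{σ∈Γ} (p_σ s_σ^r)^{s/(s+r)} ≤ c₆ ρ_i(s)^{l(Γ)}`. -/
theorem stmt15
    (N q : ℕ) (hN : 2 ≤ N) (hq : 1 ≤ q) (r : ℝ) (hr : 0 < r)
    (p : ℕ → ℕ → ℝ)
    (hp0 : ∀ i j, 0 ≤ p i j)
    (hpsupp : ∀ i j, 0 < p i j → i ∈ Finset.Icc 1 (2 * N) ∧ j ∈ Finset.Icc 1 (2 * N))
    (hpsum : ∀ i ∈ Finset.Icc 1 (2 * N), ∑ j ∈ Finset.Icc 1 (2 * N), p i j = 1)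
    (sr : ℕ → ℕ → ℝ)
    (hsrInv : ∀ i ∈ Finset.Icc 1 N, ∀ j ∈ Finset.Icc 1 N, ∀ a b : ℕ,
      (a = i ∨ a = i + N) → (b = j ∨ b = j + N) → 0 < p a b → sr a b = sr i j)
    (hsr : ∀ i ∈ Finset.Icc 1 N, ∀ j ∈ Finset.Icc 1 N, isSword p N [i, j] →
      0 < sr i j ∧ sr i j < 1)
    (hA1 : A1 p N) (hA2 : A2 p N) (hA3 : A3 p N)
    (s1 : ℝ) (hs1 : 0 < s1) (hρ1 : specRad (matA1 p sr N r (s1 / (s1 + r))) = 1)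
    (s2 : ℝ) (hs2 : 0 < s2) (hρ2 : specRad (matA2 p sr N r (s2 / (s2 + r))) = 1)
    (s : ℝ) (hs : 0 < s) :
    (∃ c5 c6 : ℝ, 0 < c5 ∧ 0 < c6 ∧
      ∀ Γ : Finset (List ℕ),
        (isMaxAntichain (isH1word p N) (isH1seq p N) Γ ∨
          ∃ j ∈ Finset.Icc 1 N, isMaxAntichain
            (fun σ => isH1word p N σ ∧ σ.headD 0 = j)
            (fun x => isH1seq p N x ∧ x 0 = j) Γ) →
        (s ≤ s1 →
          c5 * specRad (matA1 p sr N r (s / (s + r))) ^ minLen Γ ≤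
              (∑ σ ∈ Γ, (pword p σ * sword sr σ ^ r) ^ (s / (s + r))) ∧
            (∑ σ ∈ Γ, (pword p σ * sword sr σ ^ r) ^ (s / (s + r))) ≤
              c6 * specRad (matA1 p sr N r (s / (s + r))) ^ maxLen Γ) ∧
        (s1 < s →
          c5 * specRad (matA1 p sr N r (s / (s + r))) ^ maxLen Γ ≤
              (∑ σ ∈ Γ, (pword p σ * sword sr σ ^ r) ^ (s / (s + r))) ∧
            (∑ σ ∈ Γ, (pword p σ * sword sr σ ^ r) ^ (s / (s + r))) ≤
              c6 * specRad (matA1 p sr N r (s / (s + r))) ^ minLen Γ)) ∧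
    (∃ c5 c6 : ℝ, 0 < c5 ∧ 0 < c6 ∧
      ∀ Γ : Finset (List ℕ),
        (isMaxAntichain (isH2word p N) (isH2seq p N) Γ ∨
          ∃ j ∈ Finset.Icc 1 N, isMaxAntichain
            (fun σ => isH2word p N σ ∧ σ.headD 0 = j + N)
            (fun x => isH2seq p N x ∧ x 0 = j + N) Γ) →
        (s ≤ s2 →
          c5 * specRad (matA2 p sr N r (s / (s + r))) ^ minLen Γ ≤
              (∑ σ ∈ Γ, (pword p σ * sword sr σ ^ r) ^ (s / (s + r))) ∧
            (∑ σ ∈ Γ, (pword p σ * sword sr σ ^ r) ^ (s / (s + r))) ≤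
              c6 * specRad (matA2 p sr N r (s / (s + r))) ^ maxLen Γ) ∧
        (s2 < s →
          c5 * specRad (matA2 p sr N r (s / (s + r))) ^ maxLen Γ ≤
              (∑ σ ∈ Γ, (pword p σ * sword sr σ ^ r) ^ (s / (s + r))) ∧
            (∑ σ ∈ Γ, (pword p σ * sword sr σ ^ r) ^ (s / (s + r))) ≤
              c6 * specRad (matA2 p sr N r (s / (s + r))) ^ minLen Γ)) := by
  classical
  have hN0 : 0 < N := by omega
  set t := s / (s + r) with htdef
  have ht : 0 < t := div_pos hs (by linarith)
  have hp1 : ∀ a b, p a b ≤ 1 := by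
    intro a b
    rcases (hp0 a b).lt_or_eq with h | h
    · obtain ⟨haI, hbI⟩ := hpsupp a b h
      calc p a b ≤ ∑ c ∈ Finset.Icc 1 (2*N), p a c :=
            Finset.single_le_sum (fun c _ => hp0 a c) hbI
      _ = 1 := hpsum a haI
    · rw [← h]; exact zero_le_one
  have hkey : ∀ i ∈ Finset.Icc 1 N, ∀ j ∈ Finset.Icc 1 N, ∀ a b : ℕ,
      (a = i ∨ a = i + N) → (b = j ∨ b = j + N) → 0 < p a b →
      0 < sr a b ∧ sr a b ≤ 1 := by
    intro i hi j hj a b ha hb hab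
    have hlift : [a, b] ∈ lifts N [i, j] := by
      have h1 : [b] ∈ lifts N [j] := by
        rw [show lifts N [j] = (lifts N []).biUnion
            (fun l => ({j :: l, (j + N) :: l} : Finset (List ℕ))) from rfl]
        rw [Finset.mem_biUnion]
        refine ⟨[], by rw [show lifts N [] = {[]} from rfl]; simp, ?_⟩
        rcases hb with rfl | rfl <;> simp
      rw [show lifts N [i, j] = (lifts N [j]).biUnion
          (fun l => ({i :: l, (i + N) :: l} : Finset (List ℕ))) from rfl]
      rw [Finset.mem_biUnion]
      refine ⟨[b], h1, ?_⟩
      rcases ha with rfl | rfl <;> simp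
    have hsw : isSword p N [i, j] := by
      refine ⟨⟨by simp, ?_⟩, ⟨[a, b], ?_⟩⟩
      · intro x hx
        rcases List.mem_pair.1 hx with rfl | rfl
        · exact hi
        · exact hj
      · rw [Gam, Finset.mem_filter]
        exact ⟨hlift, List.isChain_cons_cons.2 ⟨hab, List.isChain_singleton b⟩⟩
    have heq : sr a b = sr i j := hsrInv i hi j hj a b ha hb hab
    have h2 := hsr i hi j hj hsw
    rw [heq]
    exact ⟨h2.1, h2.2.le⟩
  have hsrp : ∀ a b, 0 < p a b → 0 < sr a b ∧ sr a b ≤ 1 := by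
    intro a b hab
    obtain ⟨haI, hbI⟩ := hpsupp a b hab
    rw [Finset.mem_Icc] at haI hbI
    rcases le_or_gt a N with haN | haN <;> rcases le_or_gt b N with hbN | hbN
    · exact hkey a (Finset.mem_Icc.2 ⟨haI.1, haN⟩) b (Finset.mem_Icc.2 ⟨hbI.1, hbN⟩)
        a b (Or.inl rfl) (Or.inl rfl) hab
    · exact hkey a (Finset.mem_Icc.2 ⟨haI.1, haN⟩) (b - N)
        (Finset.mem_Icc.2 ⟨by omega, by omega⟩) a b (Or.inl rfl) (Or.inr (by omega)) hab
    · exfalso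
      have h0 := hA1.2.2 (a - N) (Finset.mem_Icc.2 ⟨by omega, by omega⟩) b
        (Finset.mem_Icc.2 ⟨by omega, by omega⟩)
      rw [show a - N + N = a by omega] at h0
      rw [h0] at hab
      exact lt_irrefl 0 hab
    · exact hkey (a - N) (Finset.mem_Icc.2 ⟨by omega, by omega⟩) (b - N)
        (Finset.mem_Icc.2 ⟨by omega, by omega⟩) a b (Or.inr (by omega)) (Or.inr (by omega)) hab
  have hsrpos : ∀ a b, 0 < p a b → 0 < sr a b := fun a b h => (hsrp a b h).1
  have hcomp : ∀ (u u' : ℝ), 0 < u → u ≤ u' → ∀ a b,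
      (p a b * sr a b ^ r) ^ u' ≤ (p a b * sr a b ^ r) ^ u := by
    intro u u' hu huu a b
    rcases (hp0 a b).lt_or_eq with h | h
    · have hs' := hsrp a b h
      have hx : 0 < p a b * sr a b ^ r := mul_pos h (Real.rpow_pos_of_pos hs'.1 r)
      have hx1 : p a b * sr a b ^ r ≤ 1 := by
        calc p a b * sr a b ^ r ≤ 1 * 1 :=
              mul_le_mul (hp1 a b) (Real.rpow_le_one hs'.1.le hs'.2 hr.le)
                (Real.rpow_nonneg hs'.1.le r) zero_le_one
        _ = 1 := mul_one 1
      exact Real.rpow_le_rpow_of_exponent_ge hx hx1 huu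
    · rw [← h, zero_mul, Real.zero_rpow hu.ne', Real.zero_rpow (by linarith : u' ≠ 0)]
  have htmono : ∀ u u' : ℝ, 0 < u → u ≤ u' → u / (u + r) ≤ u' / (u' + r) := by
    intro u u' hu huu
    rw [div_le_div_iff₀ (by linarith) (by linarith)]
    nlinarith
  constructor
  · -- case i = 1
    set t1 := s1 / (s1 + r) with ht1def
    have ht1 : 0 < t1 := div_pos hs1 (by linarith)
    set e : Fin N → ℕ := fun i => i.1 + 1 with hedef
    set d : ℕ → Fin N := fun a => ⟨(a - 1) % N, Nat.mod_lt _ hN0⟩ with hddef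
    have he : ∀ j : Fin N, e j ∈ Finset.Icc 1 N := by
      intro j
      have hj : e j = j.1 + 1 := rfl
      rw [hj, Finset.mem_Icc]
      have := j.2
      omega
    have hd : ∀ a ∈ Finset.Icc 1 N, e (d a) = a := by
      intro a ha
      rw [Finset.mem_Icc] at ha
      show (a - 1) % N + 1 = a
      rw [Nat.mod_eq_of_lt (by omega)]
      omega
    have hde : ∀ j : Fin N, d (e j) = j := by
      intro j
      apply Fin.ext
      show (j.1 + 1 - 1) % N = j.1
      simp [Nat.mod_eq_of_lt j.2]
    have hAeq : ∀ (u : ℝ) (i j : Fin N),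
        matA1 p sr N r u i j = (p (e i) (e j) * sr (e i) (e j) ^ r) ^ u := fun u i j => rfl
    have hAnnu : ∀ u : ℝ, 0 < u → ∀ i j, 0 ≤ matA1 p sr N r u i j := by
      intro u hu i j
      rw [hAeq]
      rcases (hp0 (e i) (e j)).lt_or_eq with h | h
      · exact (Real.rpow_pos_of_pos
          (mul_pos h (Real.rpow_pos_of_pos (hsrpos _ _ h) r)) u).le
      · rw [← h, zero_mul, Real.zero_rpow hu.ne']
    have hirrA : ∀ u : ℝ, matIrred (matA1 p sr N r u) := by
      intro u i j
      obtain ⟨c, hcS, hc⟩ := hA1.1 (e i) (he i) (e j) (he j)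
      have hrel : ∀ x ∈ Finset.Icc 1 N, ∀ y ∈ Finset.Icc 1 N, edge p x y →
          0 < matA1 p sr N r u (d x) (d y) := by
        intro x hx y hy hxy
        have h1 : matA1 p sr N r u (d x) (d y) = (p x y * sr x y ^ r) ^ u := by
          rw [hAeq, hd x hx, hd y hy]
        rw [h1]
        exact Real.rpow_pos_of_pos (mul_pos hxy (Real.rpow_pos_of_pos (hsrpos x y hxy) r)) u
      have hchain := chain_map hrel (c ++ [e j]) (e i) (he i)
        (by
          intro x hx
          rcases List.mem_append.1 hx with h | h
          · exact hcS x h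
          · rw [List.mem_singleton] at h; subst h; exact he j) hc
      rw [List.map_append, List.map_singleton, hde] at hchain
      rw [hde] at hchain
      exact ⟨c.map d, hchain⟩
    have hspec : ∀ u : ℝ, 0 < u → specRad (matA1 p sr N r u) = cwLam (matA1 p sr N r u) :=
      fun u hu => specRad_eq_cwLam hN0 _ (hAnnu u hu) (hirrA u)
    have hb1 : s ≤ s1 → 1 ≤ specRad (matA1 p sr N r t) := by
      intro hss
      have hle : t ≤ t1 := htmono s s1 hs hss
      have hmle : ∀ i j, matA1 p sr N r t1 i j ≤ matA1 p sr N r t i j := by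
        intro i j
        rw [hAeq, hAeq]
        exact hcomp t t1 ht hle (e i) (e j)
      have hmono := cwLam_mono hN0 (hAnnu t1 ht1) hmle
      rw [hspec t ht, ← hρ1, hspec t1 ht1]
      exact hmono
    have hb2 : s1 < s → specRad (matA1 p sr N r t) ≤ 1 := by
      intro hss
      have hle : t1 ≤ t := htmono s1 s hs1 hss.le
      have hmle : ∀ i j, matA1 p sr N r t i j ≤ matA1 p sr N r t1 i j := by
        intro i j
        rw [hAeq, hAeq]
        exact hcomp t1 t ht1 hle (e i) (e j)
      have hmono := cwLam_mono hN0 (hAnnu t ht) hmle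
      rw [hspec t ht, ← hρ1, hspec t1 ht1]
      exact hmono
    obtain ⟨c5, c6, hc5, hc6, hP⟩ := case_bounds hN0 p sr r t ht hp0 hsrpos
      (Finset.Icc 1 N) e d he hd hde (matA1 p sr N r t) (hAeq t) (hirrA t)
    refine ⟨c5, c6, hc5, hc6, ?_⟩
    intro Γ hΓcase
    have hmain : (1 ≤ specRad (matA1 p sr N r t) →
        c5 * specRad (matA1 p sr N r t) ^ minLen Γ ≤
            ∑ σ ∈ Γ, (pword p σ * sword sr σ ^ r) ^ t ∧
          ∑ σ ∈ Γ, (pword p σ * sword sr σ ^ r) ^ t ≤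
            c6 * specRad (matA1 p sr N r t) ^ maxLen Γ) ∧
        (specRad (matA1 p sr N r t) ≤ 1 →
          c5 * specRad (matA1 p sr N r t) ^ maxLen Γ ≤
              ∑ σ ∈ Γ, (pword p σ * sword sr σ ^ r) ^ t ∧
            ∑ σ ∈ Γ, (pword p σ * sword sr σ ^ r) ^ t ≤
              c6 * specRad (matA1 p sr N r t) ^ minLen Γ) := by
      rcases hΓcase with hfull | ⟨j, hj, hro⟩
      · refine hP (Finset.Icc 1 N) (le_refl _)
          ⟨1, Finset.mem_Icc.2 ⟨le_refl 1, by omega⟩⟩ Γ ?_ ?_ ?_ ?_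
        · exact fun σ hσ => hfull.1 σ hσ
        · intro σ hσ
          obtain ⟨hne, hS, _⟩ := hfull.1 σ hσ
          exact hS _ (headD_mem hne)
        · exact hfull.2.1
        · intro x _ hxS hxE
          exact hfull.2.2 x ⟨hxS, hxE⟩
      · refine hP {j} (Finset.singleton_subset_iff.2 hj) ⟨j, Finset.mem_singleton_self j⟩
          Γ ?_ ?_ ?_ ?_
        · exact fun σ hσ => (hro.1 σ hσ).1
        · exact fun σ hσ => Finset.mem_singleton.2 (hro.1 σ hσ).2
        · exact hro.2.1
        · intro x hx0 hxS hxE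
          exact hro.2.2 x ⟨⟨hxS, hxE⟩, Finset.mem_singleton.1 hx0⟩
    exact ⟨fun hss => hmain.1 (hb1 hss), fun hss => hmain.2 (hb2 hss)⟩
  · -- case i = 2
    set t2 := s2 / (s2 + r) with ht2def
    have ht2 : 0 < t2 := div_pos hs2 (by linarith)
    set e : Fin N → ℕ := fun i => i.1 + 1 + N with hedef
    set d : ℕ → Fin N := fun a => ⟨(a - 1 - N) % N, Nat.mod_lt _ hN0⟩ with hddef
    have he : ∀ j : Fin N, e j ∈ Finset.Icc (N+1) (2*N) := by
      intro j
      have hj : e j = j.1 + 1 + N := rfl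
      rw [hj, Finset.mem_Icc]
      have := j.2
      omega
    have hd : ∀ a ∈ Finset.Icc (N+1) (2*N), e (d a) = a := by
      intro a ha
      rw [Finset.mem_Icc] at ha
      show (a - 1 - N) % N + 1 + N = a
      rw [Nat.mod_eq_of_lt (by omega)]
      omega
    have hde : ∀ j : Fin N, d (e j) = j := by
      intro j
      apply Fin.ext
      show (j.1 + 1 + N - 1 - N) % N = j.1
      rw [show j.1 + 1 + N - 1 - N = j.1 by omega]
      exact Nat.mod_eq_of_lt j.2
    have hAeq : ∀ (u : ℝ) (i j : Fin N),
        matA2 p sr N r u i j = (p (e i) (e j) * sr (e i) (e j) ^ r) ^ u := fun u i j => rfl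
    have hAnnu : ∀ u : ℝ, 0 < u → ∀ i j, 0 ≤ matA2 p sr N r u i j := by
      intro u hu i j
      rw [hAeq]
      rcases (hp0 (e i) (e j)).lt_or_eq with h | h
      · exact (Real.rpow_pos_of_pos
          (mul_pos h (Real.rpow_pos_of_pos (hsrpos _ _ h) r)) u).le
      · rw [← h, zero_mul, Real.zero_rpow hu.ne']
    have hirrA : ∀ u : ℝ, matIrred (matA2 p sr N r u) := by
      intro u i j
      obtain ⟨c, hcS, hc⟩ := hA1.2.1 (i.1 + 1)
        (Finset.mem_Icc.2 ⟨by omega, by have := i.2; omega⟩) (j.1 + 1)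
        (Finset.mem_Icc.2 ⟨by omega, by have := j.2; omega⟩)
      set F : ℕ → Fin N := fun a => ⟨(a - 1) % N, Nat.mod_lt _ hN0⟩ with hFdef
      have hrel : ∀ x ∈ Finset.Icc 1 N, ∀ y ∈ Finset.Icc 1 N,
          edge (fun a b => p (a + N) (b + N)) x y →
          0 < matA2 p sr N r u (F x) (F y) := by
        intro x hx y hy hxy
        rw [Finset.mem_Icc] at hx hy
        have h1 : matA2 p sr N r u (F x) (F y) = (p (x + N) (y + N) *
            sr (x + N) (y + N) ^ r) ^ u := by
          show (p ((x - 1) % N + 1 + N) ((y - 1) % N + 1 + N) *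
            sr ((x - 1) % N + 1 + N) ((y - 1) % N + 1 + N) ^ r) ^ u = _
          rw [Nat.mod_eq_of_lt (by omega : x - 1 < N),
            Nat.mod_eq_of_lt (by omega : y - 1 < N),
            show x - 1 + 1 + N = x + N by omega, show y - 1 + 1 + N = y + N by omega]
        rw [h1]
        have hxy' : 0 < p (x + N) (y + N) := hxy
        exact Real.rpow_pos_of_pos
          (mul_pos hxy' (Real.rpow_pos_of_pos (hsrpos _ _ hxy') r)) u
      have hchain := chain_map hrel (c ++ [j.1 + 1]) (i.1 + 1)
        (Finset.mem_Icc.2 ⟨by omega, by have := i.2; omega⟩)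
        (by
          intro x hx
          rcases List.mem_append.1 hx with h | h
          · exact hcS x h
          · rw [List.mem_singleton] at h; subst h
            exact Finset.mem_Icc.2 ⟨by omega, by have := j.2; omega⟩) hc
      rw [List.map_append, List.map_singleton] at hchain
      have hFi : F (i.1 + 1) = i := by
        apply Fin.ext
        show (i.1 + 1 - 1) % N = i.1
        simp [Nat.mod_eq_of_lt i.2]
      have hFj : F (j.1 + 1) = j := by
        apply Fin.ext
        show (j.1 + 1 - 1) % N = j.1
        simp [Nat.mod_eq_of_lt j.2]
      rw [hFi, hFj] at hchain
      exact ⟨c.map F, hchain⟩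
    have hspec : ∀ u : ℝ, 0 < u → specRad (matA2 p sr N r u) = cwLam (matA2 p sr N r u) :=
      fun u hu => specRad_eq_cwLam hN0 _ (hAnnu u hu) (hirrA u)
    have hb1 : s ≤ s2 → 1 ≤ specRad (matA2 p sr N r t) := by
      intro hss
      have hle : t ≤ t2 := htmono s s2 hs hss
      have hmle : ∀ i j, matA2 p sr N r t2 i j ≤ matA2 p sr N r t i j := by
        intro i j
        rw [hAeq, hAeq]
        exact hcomp t t2 ht hle (e i) (e j)
      have hmono := cwLam_mono hN0 (hAnnu t2 ht2) hmle
      rw [hspec t ht, ← hρ2, hspec t2 ht2]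
      exact hmono
    have hb2 : s2 < s → specRad (matA2 p sr N r t) ≤ 1 := by
      intro hss
      have hle : t2 ≤ t := htmono s2 s hs2 hss.le
      have hmle : ∀ i j, matA2 p sr N r t i j ≤ matA2 p sr N r t2 i j := by
        intro i j
        rw [hAeq, hAeq]
        exact hcomp t2 t ht2 hle (e i) (e j)
      have hmono := cwLam_mono hN0 (hAnnu t ht) hmle
      rw [hspec t ht, ← hρ2, hspec t2 ht2]
      exact hmono
    obtain ⟨c5, c6, hc5, hc6, hP⟩ := case_bounds hN0 p sr r t ht hp0 hsrpos
      (Finset.Icc (N+1) (2*N)) e d he hd hde (matA2 p sr N r t) (hAeq t) (hirrA t)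
    refine ⟨c5, c6, hc5, hc6, ?_⟩
    intro Γ hΓcase
    have hmain : (1 ≤ specRad (matA2 p sr N r t) →
        c5 * specRad (matA2 p sr N r t) ^ minLen Γ ≤
            ∑ σ ∈ Γ, (pword p σ * sword sr σ ^ r) ^ t ∧
          ∑ σ ∈ Γ, (pword p σ * sword sr σ ^ r) ^ t ≤
            c6 * specRad (matA2 p sr N r t) ^ maxLen Γ) ∧
        (specRad (matA2 p sr N r t) ≤ 1 →
          c5 * specRad (matA2 p sr N r t) ^ maxLen Γ ≤
              ∑ σ ∈ Γ, (pword p σ * sword sr σ ^ r) ^ t ∧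
            ∑ σ ∈ Γ, (pword p σ * sword sr σ ^ r) ^ t ≤
              c6 * specRad (matA2 p sr N r t) ^ minLen Γ) := by
      rcases hΓcase with hfull | ⟨j, hj, hro⟩
      · refine hP (Finset.Icc (N+1) (2*N)) (le_refl _)
          ⟨N + 1, Finset.mem_Icc.2 ⟨le_refl _, by omega⟩⟩ Γ ?_ ?_ ?_ ?_
        · exact fun σ hσ => hfull.1 σ hσ
        · intro σ hσ
          obtain ⟨hne, hS, _⟩ := hfull.1 σ hσ
          exact hS _ (headD_mem hne)
        · exact hfull.2.1
        · intro x _ hxS hxE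
          exact hfull.2.2 x ⟨hxS, hxE⟩
      · rw [Finset.mem_Icc] at hj
        refine hP {j + N} (Finset.singleton_subset_iff.2
            (Finset.mem_Icc.2 ⟨by omega, by omega⟩))
          ⟨j + N, Finset.mem_singleton_self _⟩ Γ ?_ ?_ ?_ ?_
        · exact fun σ hσ => (hro.1 σ hσ).1
        · exact fun σ hσ => Finset.mem_singleton.2 (hro.1 σ hσ).2
        · exact hro.2.1
        · intro x hx0 hxS hxE
          exact hro.2.2 x ⟨⟨hxS, hxE⟩, Finset.mem_singleton.1 hx0⟩
    exact ⟨fun hss => hmain.1 (hb1 hss), fun hss => hmain.2 (hb2 hss)⟩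


end MTM

end
end

section
/- Assume (A1), (A2) and (A3). Let ω ∈ G_n ∩ Ψ^n, τ ∈ G_m ∩ Ψ^m and υ ∈ G_l ∩ Ψ^l be such that the concatenations ω∗τ and ω∗υ∗τ belong to 𝒮*. Then ℰ_r(ω∗υ∗τ) ≤ (l+1)·(p̄·s̄^r)^{l+1}·(p̲·s̲^r)^{−1}·ℰ_r(ω∗τ), where p̲ = min_{(i,j)∈G₂}p_{i,j}, p̄ = max_{(i,j)∈G₂}p_{i,j}, s̲ = min_{(i,j)∈𝒮₂}s_{i,j}, s̄ = max_{(i,j)∈𝒮₂}s_{i,j}. -/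
open scoped Classical ENNReal
open Filter MeasureTheory

noncomputable section

namespace MTM

section Lemma42Helpers

variable {N : ℕ} {p : ℕ → ℕ → ℝ}

lemma headD_eq_head? {c : List ℕ} (h : c ≠ []) : c.head? = some (c.headD 0) := by
  cases c with
  | nil => exact absurd rfl h
  | cons a t => rfl

lemma headD_mem_s16 {c : List ℕ} (h : c ≠ []) : c.headD 0 ∈ c := by
  cases c with
  | nil => exact absurd rfl h
  | cons a t => exact List.mem_cons_self

lemma headD_append' {a b : List ℕ} (ha : a ≠ []) : (a ++ b).headD 0 = a.headD 0 := by
  cases a with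
  | nil => exact absurd rfl ha
  | cons x t => rfl

lemma getLast?_eq_getLastD' {c : List ℕ} (h : c ≠ []) : c.getLast? = some (c.getLastD 0) := by
  rw [List.getLastD_eq_getLast?, List.getLast?_eq_getLast_of_ne_nil h]; rfl

lemma getLastD_mem_s16 {c : List ℕ} (h : c ≠ []) : c.getLastD 0 ∈ c := by
  rw [List.getLastD_eq_getLast?, List.getLast?_eq_getLast_of_ne_nil h]
  exact List.getLast_mem h

lemma getLastD_cons' {a : ℕ} {l : List ℕ} (h : l ≠ []) :
    (a :: l).getLastD 0 = l.getLastD 0 := by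
  rw [List.getLastD_eq_getLast?, List.getLastD_eq_getLast?,
    show a :: l = [a] ++ l from rfl, List.getLast?_append_of_ne_nil _ h]

lemma getLastD_append' {a b : List ℕ} (hb : b ≠ []) : (a ++ b).getLastD 0 = b.getLastD 0 := by
  rw [List.getLastD_eq_getLast?, List.getLastD_eq_getLast?,
    List.getLast?_append_of_ne_nil _ hb]

lemma mem_lifts_cons {i : ℕ} {t τ : List ℕ} :
    τ ∈ lifts N (i :: t) ↔ ∃ l ∈ lifts N t, τ = i :: l ∨ τ = (i + N) :: l := by
  simp [lifts]

lemma mem_lifts_nil {τ : List ℕ} : τ ∈ lifts N ([] : List ℕ) ↔ τ = [] := by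
  simp [lifts]

lemma lifts_length {σ τ : List ℕ} (h : τ ∈ lifts N σ) : τ.length = σ.length := by
  induction σ generalizing τ with
  | nil => rw [mem_lifts_nil.mp h]
  | cons i t ih =>
    obtain ⟨l, hl, h | h⟩ := mem_lifts_cons.mp h <;> subst h <;> simp [ih hl]

lemma lifts_ne_nil {σ τ : List ℕ} (h : τ ∈ lifts N σ) (hσ : σ ≠ []) : τ ≠ [] := by
  intro h'
  apply hσ
  have := lifts_length h
  rw [h'] at this
  exact List.length_eq_zero_iff.mp this.symm

lemma self_mem_lifts (σ : List ℕ) : σ ∈ lifts N σ := by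
  induction σ with
  | nil => exact mem_lifts_nil.mpr rfl
  | cons i t ih => exact mem_lifts_cons.mpr ⟨t, ih, Or.inl rfl⟩

lemma mem_lifts_append {x y τ : List ℕ} :
    τ ∈ lifts N (x ++ y) ↔ ∃ a ∈ lifts N x, ∃ b ∈ lifts N y, τ = a ++ b := by
  induction x generalizing τ with
  | nil =>
    simp only [List.nil_append]
    constructor
    · intro h; exact ⟨[], mem_lifts_nil.mpr rfl, τ, h, rfl⟩
    · rintro ⟨a, ha, b, hb, rfl⟩
      rw [mem_lifts_nil.mp ha]; simpa using hb
  | cons i t ih =>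
    constructor
    · intro h
      obtain ⟨l, hl, h | h⟩ := mem_lifts_cons.mp h <;>
        obtain ⟨a, ha, b, hb, rfl⟩ := ih.mp hl
      · exact ⟨i :: a, mem_lifts_cons.mpr ⟨a, ha, Or.inl rfl⟩, b, hb, by simp [h]⟩
      · exact ⟨(i + N) :: a, mem_lifts_cons.mpr ⟨a, ha, Or.inr rfl⟩, b, hb, by simp [h]⟩
    · rintro ⟨a, ha, b, hb, rfl⟩
      obtain ⟨l, hl, h | h⟩ := mem_lifts_cons.mp ha <;> subst h
      · exact mem_lifts_cons.mpr ⟨l ++ b, ih.mpr ⟨l, hl, b, hb, rfl⟩, Or.inl rfl⟩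
      · exact mem_lifts_cons.mpr ⟨l ++ b, ih.mpr ⟨l, hl, b, hb, rfl⟩, Or.inr rfl⟩

lemma lifts_headD {σ τ : List ℕ} (h : τ ∈ lifts N σ) (hσ : σ ≠ []) :
    τ.headD 0 = σ.headD 0 ∨ τ.headD 0 = σ.headD 0 + N := by
  cases σ with
  | nil => exact absurd rfl hσ
  | cons i t =>
    obtain ⟨l, hl, h | h⟩ := mem_lifts_cons.mp h <;> subst h <;> simp

lemma lifts_getLastD {σ τ : List ℕ} (h : τ ∈ lifts N σ) (hσ : σ ≠ []) :
    τ.getLastD 0 = σ.getLastD 0 ∨ τ.getLastD 0 = σ.getLastD 0 + N := by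
  induction σ generalizing τ with
  | nil => exact absurd rfl hσ
  | cons i t ih =>
    obtain ⟨l, hl, h | h⟩ := mem_lifts_cons.mp h <;> subst h <;>
    · cases t with
      | nil =>
        rw [mem_lifts_nil.mp hl]
        simp [List.getLastD_cons]
      | cons j t' =>
        have hlne : l ≠ [] := lifts_ne_nil hl (by simp)
        rw [getLastD_cons' hlne, getLastD_cons' (show j :: t' ≠ [] by simp)]
        exact ih hl (by simp)

lemma lifts_mem_Icc {σ τ : List ℕ} (h : τ ∈ lifts N σ)
    (hσ : ∀ x ∈ σ, x ∈ Finset.Icc 1 N) : ∀ y ∈ τ, y ∈ Finset.Icc 1 (2 * N) := by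
  induction σ generalizing τ with
  | nil => rw [mem_lifts_nil.mp h]; intro y hy; cases hy
  | cons i t ih =>
    have hi : i ∈ Finset.Icc 1 N := hσ i (by simp)
    rw [Finset.mem_Icc] at hi
    obtain ⟨l, hl, h | h⟩ := mem_lifts_cons.mp h <;> subst h <;>
      intro y hy <;> rcases List.mem_cons.mp hy with rfl | hy'
    · rw [Finset.mem_Icc]; omega
    · exact ih hl (fun x hx => hσ x (List.mem_cons_of_mem _ hx)) y hy'
    · rw [Finset.mem_Icc]; omega
    · exact ih hl (fun x hx => hσ x (List.mem_cons_of_mem _ hx)) y hy'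

lemma pword_nonneg'_s16 {g : ℕ → ℕ → ℝ} :
    ∀ c : List ℕ, c.Chain' (fun a b => 0 ≤ g a b) → 0 ≤ pword g c
  | [], _ => by simp [pword]
  | [a], _ => by simp [pword]
  | a :: b :: t, h => by
    have h' := List.isChain_cons_cons.mp h
    exact mul_nonneg h'.1 (pword_nonneg'_s16 (b :: t) h'.2)

lemma pword_le_pow {g : ℕ → ℕ → ℝ} {M : ℝ} (hM : 0 ≤ M) :
    ∀ c : List ℕ, c.Chain' (fun a b => 0 ≤ g a b ∧ g a b ≤ M) →
      pword g c ≤ M ^ (c.length - 1)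
  | [], _ => by simp [pword]
  | [a], _ => by simp [pword]
  | a :: b :: t, h => by
    have h' := List.isChain_cons_cons.mp h
    have ih := pword_le_pow hM (b :: t) h'.2
    have hnn : 0 ≤ pword g (b :: t) :=
      pword_nonneg'_s16 (b :: t) (h'.2.imp fun _ _ h => h.1)
    have hstep : pword g (a :: b :: t) ≤ M * M ^ ((b :: t).length - 1) :=
      mul_le_mul h'.1.2 ih hnn hM
    calc pword g (a :: b :: t) ≤ M * M ^ ((b :: t).length - 1) := hstep
      _ = M ^ ((a :: b :: t).length - 1) := by
          simp [pow_succ, mul_comm]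

lemma pword_append' {g : ℕ → ℕ → ℝ} :
    ∀ a : List ℕ, a ≠ [] → ∀ b : List ℕ, b ≠ [] →
      pword g (a ++ b) = pword g a * (g (a.getLastD 0) (b.headD 0) * pword g b)
  | [], h, _, _ => absurd rfl h
  | [x], _, b, hb => by
    cases b with
    | nil => exact absurd rfl hb
    | cons y t => simp [pword]
  | x :: x' :: t, _, b, hb => by
    have ih := pword_append' (g := g) (x' :: t) (by simp) b hb
    have h1 : pword g ((x :: x' :: t) ++ b) = g x x' * pword g ((x' :: t) ++ b) := rfl
    have h2 : (x :: x' :: t).getLastD 0 = (x' :: t).getLastD 0 :=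
      getLastD_cons' (by simp)
    have h3 : pword g (x :: x' :: t) = g x x' * pword g (x' :: t) := rfl
    rw [h1, ih, h2, h3]
    ring

lemma sword_eq_pword {g : ℕ → ℕ → ℝ} : ∀ c : List ℕ, sword g c = pword g c
  | [] => rfl
  | [a] => rfl
  | a :: b :: t => by
    show g a b * sword g (b :: t) = g a b * pword g (b :: t)
    rw [sword_eq_pword (b :: t)]

lemma chain'_mem' {R : ℕ → ℕ → Prop} {P : ℕ → Prop} :
    ∀ c : List ℕ, c.Chain' R → (∀ x ∈ c, P x) →
      c.Chain' (fun x y => R x y ∧ P x ∧ P y)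
  | [], _, _ => List.isChain_nil
  | [a], _, _ => List.isChain_singleton _
  | a :: b :: t, h, hm => by
    unfold List.Chain' at h ⊢
    rw [List.isChain_cons_cons] at h ⊢
    exact ⟨⟨h.1, hm a (by simp), hm b (by simp)⟩,
      chain'_mem' (b :: t) h.2 (fun x hx => hm x (List.mem_cons_of_mem _ hx))⟩

lemma allUp : ∀ c : List ℕ, c.Chain' (fun x y => N < x → N < y) →
    ∀ a, c.head? = some a → N < a → ∀ y ∈ c, N < y
  | [], _, _, ha, _, _, hy => by cases hy
  | a :: t, hc, a', ha', hup, y, hy => by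
    obtain rfl : a' = a := by simpa using ha'.symm
    rcases List.mem_cons.mp hy with rfl | hy'
    · exact hup
    · cases t with
      | nil => cases hy'
      | cons b t' =>
        have h' := List.isChain_cons_cons.mp hc
        exact allUp (b :: t') h'.2 b rfl (h'.1 hup) y hy'

lemma pair_chain (hA3 : A3 p N) :
    ∀ c τ : List ℕ, τ ∈ lifts N c → τ.Chain' (edge p) →
      (∀ x ∈ c, x ∈ Finset.Icc 1 N) →
      c.Chain' (fun a b => 0 < p a b ∧ 0 < p a (b + N) ∧ 0 < p (a + N) (b + N))
  | [], _, _, _, _ => List.isChain_nil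
  | [a], _, _, _, _ => List.isChain_singleton _
  | a :: b :: t, τ, hτ, hch, hm => by
    obtain ⟨l, hl, h | h⟩ := mem_lifts_cons.mp hτ <;> subst h <;>
    · obtain ⟨l', hl', h' | h'⟩ := mem_lifts_cons.mp hl <;> subst h' <;>
      · unfold List.Chain' at hch
        rw [List.isChain_cons_cons] at hch
        have hedge := hch.1
        have ha : a ∈ Finset.Icc 1 N := hm a (by simp)
        have hb : b ∈ Finset.Icc 1 N := hm b (by simp)
        have h3 := hA3 a ha b hb
        unfold List.Chain'
        rw [List.isChain_cons_cons]
        refine ⟨?_, pair_chain hA3 (b :: t) _ hl hch.2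
          (fun x hx => hm x (List.mem_cons_of_mem _ hx))⟩
        rcases h3 with ⟨z1, z2, z3, z4⟩ | hpos
        · exfalso
          unfold edge at hedge
          first
            | (rw [z1] at hedge; exact lt_irrefl 0 hedge)
            | (rw [z2] at hedge; exact lt_irrefl 0 hedge)
            | (rw [z3] at hedge; exact lt_irrefl 0 hedge)
            | (rw [z4] at hedge; exact lt_irrefl 0 hedge)
        · exact ⟨hpos.1, hpos.2.1, hpos.2.2.2⟩

lemma fullUp : ∀ (c l : List ℕ), (∀ x ∈ c, x ≤ N) → l ∈ lifts N c →
    (∀ y ∈ l, N < y) → l = c.map (· + N)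
  | [], l, _, hl, _ => by rw [mem_lifts_nil.mp hl]; rfl
  | i :: t, l, hc, hl, hup => by
    obtain ⟨l', hl', h | h⟩ := mem_lifts_cons.mp hl <;> subst h
    · exact absurd (hup i (by simp)) (by simp [hc i (by simp)])
    · rw [List.map_cons]
      refine congrArg _ (fullUp t l' (fun x hx => hc x (List.mem_cons_of_mem _ hx)) hl'
        (fun y hy => hup y (List.mem_cons_of_mem _ hy)))

lemma countUp : ∀ (c l : List ℕ), (∀ x ∈ c, x ∈ Finset.Icc 1 N) → l ∈ lifts N c →
    l.Chain' (fun x y => N < x → N < y) →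
    l = c.take (l.countP (fun x => decide (x ≤ N))) ++
      (c.drop (l.countP (fun x => decide (x ≤ N)))).map (· + N)
  | [], l, _, hl, _ => by rw [mem_lifts_nil.mp hl]; rfl
  | i :: t, l, hc, hl, hch => by
    have hi : i ∈ Finset.Icc 1 N := hc i (by simp)
    rw [Finset.mem_Icc] at hi
    obtain ⟨l', hl', h | h⟩ := mem_lifts_cons.mp hl <;> subst h
    · have hcnt : (i :: l').countP (fun x => decide (x ≤ N)) =
          l'.countP (fun x => decide (x ≤ N)) + 1 :=
        List.countP_cons_of_pos (by simpa using hi.2)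
      rw [hcnt, List.take_succ_cons, List.drop_succ_cons, List.cons_append]
      exact congrArg _ (countUp t l' (fun x hx => hc x (List.mem_cons_of_mem _ hx)) hl'
        hch.tail)
    · have hup : ∀ y ∈ (i + N) :: l', N < y :=
        allUp _ hch (i + N) rfl (by omega)
      have hcnt : ((i + N) :: l').countP (fun x => decide (x ≤ N)) = 0 := by
        rw [List.countP_eq_zero]
        intro a ha
        simpa using Nat.lt_irrefl N ∘ fun h => lt_of_lt_of_le (hup a ha) h
      rw [hcnt, List.take_zero, List.drop_zero, List.nil_append, List.map_cons]
      refine congrArg _ (fullUp t l' (fun x hx => by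
          have := hc x (List.mem_cons_of_mem _ hx); rw [Finset.mem_Icc] at this; omega)
        hl' (fun y hy => hup y (List.mem_cons_of_mem _ hy)))

lemma pword_nonneg0 {g : ℕ → ℕ → ℝ} (hg : ∀ i j, 0 ≤ g i j) :
    ∀ c : List ℕ, 0 ≤ pword g c
  | [] => by simp [pword]
  | [a] => by simp [pword]
  | a :: b :: t => mul_nonneg (hg a b) (pword_nonneg0 hg (b :: t))

lemma edge_up (hP4 : ∀ i ∈ Finset.Icc 1 N, ∀ j ∈ Finset.Icc 1 N, p (i + N) j = 0)
    {x y : ℕ} (hx : x ∈ Finset.Icc 1 (2 * N)) (hy : y ∈ Finset.Icc 1 (2 * N))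
    (he : 0 < p x y) (hxu : N < x) : N < y := by
  by_contra hle
  push_neg at hle
  rw [Finset.mem_Icc] at hx hy
  have h0 := hP4 (x - N) (by rw [Finset.mem_Icc]; omega) y (by rw [Finset.mem_Icc]; omega)
  rw [Nat.sub_add_cancel (by omega)] at h0
  rw [h0] at he
  exact lt_irrefl 0 he

end Lemma42Helpers

/-- **Lemma 4.2.** Assume (A1)–(A3). Let `ω ∈ H_{1,n}`, `τ ∈ H_{1,m}`, `υ ∈ H_{1,l}` with
`ω∗τ, ω∗υ∗τ ∈ 𝒮^*`. Then
`ℰ_r(ω∗υ∗τ) ≤ (l+1)(p̄ s̄^r)^{l+1} (p̲ s̲^r)⁻¹ ℰ_r(ω∗τ)`. -/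
theorem stmt16
    (N q : ℕ) (hN : 2 ≤ N) (hq : 1 ≤ q) (r : ℝ) (hr : 0 < r)
    (p : ℕ → ℕ → ℝ) (χ : ℕ → ℝ)
    (hp0 : ∀ i j, 0 ≤ p i j)
    (hpsupp : ∀ i j, 0 < p i j → i ∈ Finset.Icc 1 (2 * N) ∧ j ∈ Finset.Icc 1 (2 * N))
    (hpsum : ∀ i ∈ Finset.Icc 1 (2 * N), ∑ j ∈ Finset.Icc 1 (2 * N), p i j = 1)
    (hχpos : ∀ i ∈ Finset.Icc 1 (2 * N), 0 < χ i)
    (hχsum : ∑ i ∈ Finset.Icc 1 (2 * N), χ i = 1)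
    (sr : ℕ → ℕ → ℝ)
    (T : ℕ → ℕ → EuclideanSpace ℝ (Fin q) → EuclideanSpace ℝ (Fin q))
    (J : ℕ → Set (EuclideanSpace ℝ (Fin q)))
    (hTinv : ∀ i ∈ Finset.Icc 1 N, ∀ j ∈ Finset.Icc 1 N, ∀ a b : ℕ,
      (a = i ∨ a = i + N) → (b = j ∨ b = j + N) → 0 < p a b →
      T a b = T i j ∧ sr a b = sr i j)
    (hsim : ∀ i ∈ Finset.Icc 1 N, ∀ j ∈ Finset.Icc 1 N, isSword p N [i, j] →
      0 < sr i j ∧ sr i j < 1 ∧ ∀ x y, dist (T i j x) (T i j y) = sr i j * dist x y)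
    (hJcpt : ∀ i ∈ Finset.Icc 1 N,
      IsCompact (J i) ∧ (J i).Nonempty ∧ closure (interior (J i)) = J i ∧
        Metric.diam (J i) = 1)
    (hJdisj : ∀ i ∈ Finset.Icc 1 N, ∀ j ∈ Finset.Icc 1 N, i ≠ j → Disjoint (J i) (J j))
    (hJplus : ∀ i ∈ Finset.Icc 1 N, J (i + N) = J i)
    (hnest : ∀ i ∈ Finset.Icc 1 N, ∀ j ∈ Finset.Icc 1 N, isSword p N [i, j] →
      T i j '' J j ⊆ J i)
    (hTdisj : ∀ i ∈ Finset.Icc 1 N, ∀ j ∈ Finset.Icc 1 N, ∀ l ∈ Finset.Icc 1 N,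
      isSword p N [i, j] → isSword p N [i, l] → j ≠ l →
      Disjoint (T i j '' J j) (T i l '' J l))
    (hA1 : A1 p N) (hA2 : A2 p N) (hA3 : A3 p N)
    (ω τ υ : List ℕ)
    (hω : isH1word p N ω) (hτ : isH1word p N τ) (hυ : isH1word p N υ)
    (h1 : isSword p N (ω ++ τ)) (h2 : isSword p N (ω ++ υ ++ τ)) :
    Er p χ sr N r (ω ++ υ ++ τ) ≤
      (υ.length + 1 : ℝ) * (pMax p N * sMax p sr N ^ r) ^ (υ.length + 1) *
        (pMin p N * sMin p sr N ^ r)⁻¹ * Er p χ sr N r (ω ++ τ) := by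
  classical
  obtain ⟨hωne, hωmem, hωch⟩ := hω
  obtain ⟨hτne, hτmem, hτch⟩ := hτ
  obtain ⟨hυne, hυmem, hυch⟩ := hυ
  have hlpos : 0 < υ.length := List.length_pos_iff.mpr hυne
  have hw1ne : ω ++ υ ++ τ ≠ [] := by simp [hωne]
  have hw2ne : ω ++ τ ≠ [] := by simp [hωne]
  have hw1mem : ∀ x ∈ ω ++ υ ++ τ, x ∈ Finset.Icc 1 N := by
    intro x hx
    rcases List.mem_append.mp hx with hx | hx
    · rcases List.mem_append.mp hx with hx | hx
      · exact hωmem x hx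
      · exact hυmem x hx
    · exact hτmem x hx
  have hw2mem : ∀ x ∈ ω ++ τ, x ∈ Finset.Icc 1 N := by
    intro x hx
    rcases List.mem_append.mp hx with hx | hx
    · exact hωmem x hx
    · exact hτmem x hx
  obtain ⟨s1, hs1⟩ := h2.2
  simp only [Gam, Finset.mem_filter] at hs1
  have C1 : (ω ++ υ ++ τ).Chain'
      (fun a b => 0 < p a b ∧ 0 < p a (b + N) ∧ 0 < p (a + N) (b + N)) :=
    pair_chain hA3 _ _ hs1.1 hs1.2 hw1mem
  obtain ⟨s2, hs2⟩ := h1.2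
  simp only [Gam, Finset.mem_filter] at hs2
  have C2 : (ω ++ τ).Chain'
      (fun a b => 0 < p a b ∧ 0 < p a (b + N) ∧ 0 < p (a + N) (b + N)) :=
    pair_chain hA3 _ _ hs2.1 hs2.2 hw2mem
  have hi0 : ω.getLastD 0 ∈ Finset.Icc 1 N := hωmem _ (getLastD_mem_s16 hωne)
  have hj0 : τ.headD 0 ∈ Finset.Icc 1 N := hτmem _ (headD_mem_s16 hτne)
  have hjunc : 0 < p (ω.getLastD 0) (τ.headD 0) ∧ 0 < p (ω.getLastD 0) (τ.headD 0 + N) ∧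
      0 < p (ω.getLastD 0 + N) (τ.headD 0 + N) :=
    (List.isChain_append.mp C2).2.2 _ (Option.mem_def.mpr (getLast?_eq_getLastD' hωne))
      _ (Option.mem_def.mpr (headD_eq_head? hτne))
  -- pMin / pMax facts
  have hPsub : {x | ∃ i ∈ Finset.Icc 1 (2 * N), ∃ j ∈ Finset.Icc 1 (2 * N), 0 < p i j ∧ x = p i j}
      ⊆ (fun ij : ℕ × ℕ => p ij.1 ij.2) ''
        ((Finset.Icc 1 (2 * N) ×ˢ Finset.Icc 1 (2 * N)) : Finset (ℕ × ℕ)) := by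
    rintro x ⟨i, hi, j, hj, _, rfl⟩
    exact ⟨(i, j), Finset.mem_coe.mpr (Finset.mem_product.mpr ⟨hi, hj⟩), rfl⟩
  have hPfin : {x | ∃ i ∈ Finset.Icc 1 (2 * N), ∃ j ∈ Finset.Icc 1 (2 * N),
      0 < p i j ∧ x = p i j}.Finite :=
    Set.Finite.subset (Set.Finite.image _ (Finset.finite_toSet _)) hPsub
  have hPne : {x | ∃ i ∈ Finset.Icc 1 (2 * N), ∃ j ∈ Finset.Icc 1 (2 * N),
      0 < p i j ∧ x = p i j}.Nonempty :=
    ⟨p (ω.getLastD 0) (τ.headD 0),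
      ⟨ω.getLastD 0, (hpsupp _ _ hjunc.1).1, τ.headD 0, (hpsupp _ _ hjunc.1).2, hjunc.1, rfl⟩⟩
  have hpMin_pos : 0 < pMin p N := by
    unfold pMin
    obtain ⟨i, hi, j, hj, hpos, heq⟩ := hPne.csInf_mem hPfin
    rw [heq]; exact hpos
  have hpMin_le : ∀ a b, 0 < p a b → pMin p N ≤ p a b := by
    intro a b h
    unfold pMin
    exact csInf_le hPfin.bddBelow ⟨a, (hpsupp a b h).1, b, (hpsupp a b h).2, h, rfl⟩
  have hpMax_ge : ∀ a b, 0 < p a b → p a b ≤ pMax p N := by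
    intro a b h
    unfold pMax
    exact le_csSup hPfin.bddAbove ⟨a, (hpsupp a b h).1, b, (hpsupp a b h).2, h, rfl⟩
  have hpMax_pos : 0 < pMax p N := lt_of_lt_of_le hjunc.1 (hpMax_ge _ _ hjunc.1)
  -- sMin / sMax facts
  have hSword2 : ∀ a b, a ∈ Finset.Icc 1 N → b ∈ Finset.Icc 1 N → 0 < p a b →
      isSword p N [a, b] := by
    intro a b ha hb h
    refine ⟨⟨by simp, ?_⟩, ⟨[a, b], ?_⟩⟩
    · intro x hx
      rcases List.mem_cons.mp hx with rfl | hx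
      · exact ha
      · rcases List.mem_cons.mp hx with rfl | hx
        · exact hb
        · cases hx
    · simp only [Gam, Finset.mem_filter]
      exact ⟨self_mem_lifts _, List.isChain_pair.mpr h⟩
  have hSsub : {x | ∃ i ∈ Finset.Icc 1 N, ∃ j ∈ Finset.Icc 1 N, isSword p N [i, j] ∧ x = sr i j}
      ⊆ (fun ij : ℕ × ℕ => sr ij.1 ij.2) ''
        ((Finset.Icc 1 N ×ˢ Finset.Icc 1 N) : Finset (ℕ × ℕ)) := by
    rintro x ⟨i, hi, j, hj, _, rfl⟩
    exact ⟨(i, j), Finset.mem_coe.mpr (Finset.mem_product.mpr ⟨hi, hj⟩), rfl⟩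
  have hSfin : {x | ∃ i ∈ Finset.Icc 1 N, ∃ j ∈ Finset.Icc 1 N,
      isSword p N [i, j] ∧ x = sr i j}.Finite :=
    Set.Finite.subset (Set.Finite.image _ (Finset.finite_toSet _)) hSsub
  have hsw0 : isSword p N [ω.getLastD 0, τ.headD 0] := hSword2 _ _ hi0 hj0 hjunc.1
  have hSne : {x | ∃ i ∈ Finset.Icc 1 N, ∃ j ∈ Finset.Icc 1 N,
      isSword p N [i, j] ∧ x = sr i j}.Nonempty :=
    ⟨sr (ω.getLastD 0) (τ.headD 0), ⟨ω.getLastD 0, hi0, τ.headD 0, hj0, hsw0, rfl⟩⟩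
  have hsMin_pos : 0 < sMin p sr N := by
    unfold sMin
    obtain ⟨i, hi, j, hj, hs, heq⟩ := hSne.csInf_mem hSfin
    rw [heq]; exact (hsim i hi j hj hs).1
  have hsMin_le : ∀ a b, a ∈ Finset.Icc 1 N → b ∈ Finset.Icc 1 N → isSword p N [a, b] →
      sMin p sr N ≤ sr a b := by
    intro a b ha hb hs
    unfold sMin
    exact csInf_le hSfin.bddBelow ⟨a, ha, b, hb, hs, rfl⟩
  have hsMax_ge : ∀ a b, a ∈ Finset.Icc 1 N → b ∈ Finset.Icc 1 N → isSword p N [a, b] →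
      sr a b ≤ sMax p sr N := by
    intro a b ha hb hs
    unfold sMax
    exact le_csSup hSfin.bddAbove ⟨a, ha, b, hb, hs, rfl⟩
  have hsMax_pos : 0 < sMax p sr N :=
    lt_of_lt_of_le (hsim _ hi0 _ hj0 hsw0).1 (hsMax_ge _ _ hi0 hj0 hsw0)
  have CS1 : (ω ++ υ ++ τ).Chain' (fun a b => 0 ≤ sr a b ∧ sr a b ≤ sMax p sr N) :=
    (chain'_mem' _ C1 hw1mem).imp (fun a b h => by
      have hsw := hSword2 a b h.2.1 h.2.2 h.1.1
      exact ⟨(hsim a h.2.1 b h.2.2 hsw).1.le, hsMax_ge a b h.2.1 h.2.2 hsw⟩)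
  have CS2 : (ω ++ τ).Chain' (fun a b => 0 ≤ sr a b ∧ sr a b ≤ sMax p sr N) :=
    (chain'_mem' _ C2 hw2mem).imp (fun a b h => by
      have hsw := hSword2 a b h.2.1 h.2.2 h.1.1
      exact ⟨(hsim a h.2.1 b h.2.2 hsw).1.le, hsMax_ge a b h.2.1 h.2.2 hsw⟩)
  have hP4 := hA1.2.2
  -- the key decomposition of admissible lifts of ω ++ υ ++ τ
  have key : ∀ s ∈ Gam p N (ω ++ υ ++ τ),
      ∃ a u b : List ℕ, s = (a ++ u) ++ b ∧ a.length = ω.length ∧ u ∈ lifts N υ ∧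
        u.Chain' (fun x y => N < x → N < y) ∧
        (s.drop ω.length).take υ.length = u ∧
        s.take ω.length ++ s.drop (ω.length + υ.length) = a ++ b ∧
        (s.take ω.length ++ s.drop (ω.length + υ.length)) ∈ Gam p N (ω ++ τ) ∧
        χ (s.headD 0) * pword p s ≤
          pMax p N ^ (υ.length + 1) * (pMin p N)⁻¹ *
            (χ ((s.take ω.length ++ s.drop (ω.length + υ.length)).headD 0) *
              pword p (s.take ω.length ++ s.drop (ω.length + υ.length))) := by
    intro s hs
    simp only [Gam, Finset.mem_filter] at hs
    obtain ⟨hsl, hsch⟩ := hs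
    obtain ⟨au, hau, b, hb, rfl⟩ := mem_lifts_append.mp hsl
    obtain ⟨a, ha, u, hu, rfl⟩ := mem_lifts_append.mp hau
    have hla : a.length = ω.length := lifts_length ha
    have hlu : u.length = υ.length := lifts_length hu
    have hane : a ≠ [] := lifts_ne_nil ha hωne
    have hune : u ≠ [] := lifts_ne_nil hu hυne
    have hbne : b ≠ [] := lifts_ne_nil hb hτne
    have hubne : u ++ b ≠ [] := by simp [hune]
    have htake : ((a ++ u) ++ b).take ω.length = a := by
      rw [List.append_assoc]; exact List.take_left' hla
    have hdrop : ((a ++ u) ++ b).drop (ω.length + υ.length) = b :=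
      List.drop_left' (by rw [List.length_append, hla, hlu])
    have hmid : (((a ++ u) ++ b).drop ω.length).take υ.length = u := by
      rw [List.append_assoc, List.drop_left' hla, List.take_left' hlu]
    have hsmem : ∀ y ∈ (a ++ u) ++ b, y ∈ Finset.Icc 1 (2 * N) := lifts_mem_Icc hsl hw1mem
    have hsch2 : (a ++ (u ++ b)).Chain' (edge p) := by
      rw [← List.append_assoc]; exact hsch
    obtain ⟨hcha, hchub, hjab⟩ := List.isChain_append.mp hsch2
    obtain ⟨hchu, hchb, hjub⟩ := List.isChain_append.mp hchub
    have hj1 : 0 < p (a.getLastD 0) ((u ++ b).headD 0) :=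
      hjab _ (Option.mem_def.mpr (getLast?_eq_getLastD' hane))
        _ (Option.mem_def.mpr (headD_eq_head? hubne))
    have hj2 : 0 < p (u.getLastD 0) (b.headD 0) :=
      hjub _ (Option.mem_def.mpr (getLast?_eq_getLastD' hune))
        _ (Option.mem_def.mpr (headD_eq_head? hbne))
    have hmemub : ∀ y ∈ u ++ b, y ∈ Finset.Icc 1 (2 * N) := by
      intro y hy
      apply hsmem
      rw [List.append_assoc]
      exact List.mem_append_right a hy
    have hupchain : (u ++ b).Chain' (fun x y => N < x → N < y) :=
      (chain'_mem' _ hchub hmemub).imp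
        (fun x y h hx => edge_up hP4 h.2.1 h.2.2 h.1 hx)
    have hupu : u.Chain' (fun x y => N < x → N < y) :=
      (chain'_mem' _ hchu (fun y hy => hmemub y (List.mem_append_left _ hy))).imp
        (fun x y h hx => edge_up hP4 h.2.1 h.2.2 h.1 hx)
    have hxΨ := lifts_getLastD ha hωne
    have hyΨ := lifts_headD hb hτne
    have halast : a.getLastD 0 ∈ Finset.Icc 1 (2 * N) := by
      apply hsmem
      rw [List.append_assoc]
      exact List.mem_append_left _ (getLastD_mem_s16 hane)
    have hedgexy : 0 < p (a.getLastD 0) (b.headD 0) := by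
      rcases hxΨ with hx | hx
      · rcases hyΨ with hy | hy
        · rw [hx, hy]; exact hjunc.1
        · rw [hx, hy]; exact hjunc.2.1
      · have hi0' := hi0
        rw [Finset.mem_Icc] at hi0'
        have hxup : N < a.getLastD 0 := by rw [hx]; omega
        have hhead : N < (u ++ b).headD 0 :=
          edge_up hP4 halast (hmemub _ (headD_mem_s16 hubne)) hj1 hxup
        have hallup : ∀ y ∈ u ++ b, N < y :=
          allUp _ hupchain _ (headD_eq_head? hubne) hhead
        have hyup : N < b.headD 0 := hallup _ (List.mem_append_right u (headD_mem_s16 hbne))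
        have hy : b.headD 0 = τ.headD 0 + N := by
          rcases hyΨ with hy | hy
          · exfalso
            have hj0' := hj0
            rw [Finset.mem_Icc] at hj0'
            omega
          · exact hy
        rw [hx, hy]
        exact hjunc.2.2
    have hchab : (a ++ b).Chain' (edge p) := by
      unfold List.Chain'
      rw [List.isChain_append]
      refine ⟨hcha, hchb, ?_⟩
      intro x hx y hy
      rw [Option.mem_def, getLast?_eq_getLastD' hane] at hx
      rw [Option.mem_def, headD_eq_head? hbne] at hy
      obtain rfl : a.getLastD 0 = x := Option.some_inj.mp hx
      obtain rfl : b.headD 0 = y := Option.some_inj.mp hy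
      exact hedgexy
    have hfe : ((a ++ u) ++ b).take ω.length ++ ((a ++ u) ++ b).drop (ω.length + υ.length)
        = a ++ b := by rw [htake, hdrop]
    have hfmem : (((a ++ u) ++ b).take ω.length ++
        ((a ++ u) ++ b).drop (ω.length + υ.length)) ∈ Gam p N (ω ++ τ) := by
      rw [hfe]
      simp only [Gam, Finset.mem_filter]
      exact ⟨mem_lifts_append.mpr ⟨a, ha, b, hb, rfl⟩, hchab⟩
    have nna : 0 ≤ pword p a := pword_nonneg0 hp0 a
    have nnb : 0 ≤ pword p b := pword_nonneg0 hp0 b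
    have hpu : pword p u ≤ pMax p N ^ (υ.length - 1) := by
      have := pword_le_pow hpMax_pos.le u
        (hchu.imp (fun x y h => ⟨(hp0 x y), hpMax_ge x y h⟩))
      rwa [hlu] at this
    have hpws : pword p ((a ++ u) ++ b) =
        pword p a * (p (a.getLastD 0) ((u ++ b).headD 0) *
          (pword p u * (p (u.getLastD 0) (b.headD 0) * pword p b))) := by
      rw [List.append_assoc, pword_append' a hane (u ++ b) hubne,
        pword_append' u hune b hbne]
    have hb1 : p (a.getLastD 0) ((u ++ b).headD 0) ≤ pMax p N := hpMax_ge _ _ hj1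
    have hb2 : p (u.getLastD 0) (b.headD 0) ≤ pMax p N := hpMax_ge _ _ hj2
    have step1 : pword p ((a ++ u) ++ b) ≤
        pword p a * (pMax p N * (pMax p N ^ (υ.length - 1) * (pMax p N * pword p b))) := by
      rw [hpws]
      apply mul_le_mul_of_nonneg_left _ nna
      apply mul_le_mul hb1 _ _ hpMax_pos.le
      · exact mul_le_mul hpu (mul_le_mul_of_nonneg_right hb2 nnb)
          (mul_nonneg (hp0 _ _) nnb) (pow_nonneg hpMax_pos.le _)
      · exact mul_nonneg (pword_nonneg0 hp0 u) (mul_nonneg (hp0 _ _) nnb)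
    have hcomb : pword p a * (pMax p N * (pMax p N ^ (υ.length - 1) * (pMax p N * pword p b)))
        = pMax p N ^ (υ.length + 1) * (pword p a * pword p b) := by
      have h2 : (υ.length - 1) + 2 = υ.length + 1 := by omega
      calc pword p a * (pMax p N * (pMax p N ^ (υ.length - 1) * (pMax p N * pword p b)))
          = pMax p N ^ (υ.length - 1) * pMax p N ^ 2 * (pword p a * pword p b) := by ring
        _ = pMax p N ^ ((υ.length - 1) + 2) * (pword p a * pword p b) := by rw [pow_add]
        _ = _ := by rw [h2]
    have hpwf : pword p (a ++ b) = pword p a * (p (a.getLastD 0) (b.headD 0) * pword p b) :=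
      pword_append' a hane b hbne
    have hABle : pword p a * pword p b ≤ (pMin p N)⁻¹ * pword p (a ++ b) := by
      rw [← div_eq_inv_mul, le_div_iff₀ hpMin_pos]
      calc pword p a * pword p b * pMin p N
          ≤ pword p a * pword p b * p (a.getLastD 0) (b.headD 0) :=
            mul_le_mul_of_nonneg_left (hpMin_le _ _ hedgexy) (mul_nonneg nna nnb)
        _ = pword p (a ++ b) := by rw [hpwf]; ring
    have hheads : ((a ++ u) ++ b).headD 0 = a.headD 0 := by
      rw [List.append_assoc, headD_append' hane]
    have hheadf : (a ++ b).headD 0 = a.headD 0 := headD_append' hane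
    have hheadmem : a.headD 0 ∈ (a ++ u) ++ b := by
      rw [List.append_assoc]
      exact List.mem_append_left _ (headD_mem_s16 hane)
    have hχnn : 0 ≤ χ (a.headD 0) := (hχpos _ (hsmem _ hheadmem)).le
    refine ⟨a, u, b, rfl, hla, hu, hupu, hmid, hfe, hfmem, ?_⟩
    rw [hfe, hheads, hheadf]
    calc χ (a.headD 0) * pword p ((a ++ u) ++ b)
        ≤ χ (a.headD 0) * (pMax p N ^ (υ.length + 1) * ((pMin p N)⁻¹ * pword p (a ++ b))) := by
          apply mul_le_mul_of_nonneg_left _ hχnn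
          calc pword p ((a ++ u) ++ b)
              ≤ pMax p N ^ (υ.length + 1) * (pword p a * pword p b) := by
                rw [← hcomb]; exact step1
            _ ≤ pMax p N ^ (υ.length + 1) * ((pMin p N)⁻¹ * pword p (a ++ b)) :=
                mul_le_mul_of_nonneg_left hABle (pow_nonneg hpMax_pos.le _)
      _ = pMax p N ^ (υ.length + 1) * (pMin p N)⁻¹ * (χ (a.headD 0) * pword p (a ++ b)) := by
          ring
  -- the measure comparison
  have hmaps : ∀ s ∈ Gam p N (ω ++ υ ++ τ),
      (s.take ω.length ++ s.drop (ω.length + υ.length)) ∈ Gam p N (ω ++ τ) := by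
    intro s hs
    obtain ⟨a, u, b, _, _, _, _, _, _, hmem, _⟩ := key s hs
    exact hmem
  have hμ2nn : 0 ≤ muJ p χ N (ω ++ τ) := by
    apply Finset.sum_nonneg
    intro ρ hρ
    simp only [Gam, Finset.mem_filter] at hρ
    have hρne : ρ ≠ [] := lifts_ne_nil hρ.1 hw2ne
    exact mul_nonneg (hχpos _ (lifts_mem_Icc hρ.1 hw2mem _ (headD_mem_s16 hρne))).le
      (pword_nonneg0 hp0 ρ)
  have hμ : muJ p χ N (ω ++ υ ++ τ) ≤
      ((υ.length : ℝ) + 1) * (pMax p N ^ (υ.length + 1) * (pMin p N)⁻¹) *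
        muJ p χ N (ω ++ τ) := by
    unfold muJ
    rw [← Finset.sum_fiberwise_of_maps_to hmaps (fun s => χ (s.headD 0) * pword p s),
      Finset.mul_sum]
    apply Finset.sum_le_sum
    intro ρ hρ
    have hρ' := hρ
    simp only [Gam, Finset.mem_filter] at hρ'
    have hρne : ρ ≠ [] := lifts_ne_nil hρ'.1 hw2ne
    have hFρnn : 0 ≤ χ (ρ.headD 0) * pword p ρ :=
      mul_nonneg (hχpos _ (lifts_mem_Icc hρ'.1 hw2mem _ (headD_mem_s16 hρne))).le
        (pword_nonneg0 hp0 ρ)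
    have hterm : ∀ s ∈ (Gam p N (ω ++ υ ++ τ)).filter
        (fun s => s.take ω.length ++ s.drop (ω.length + υ.length) = ρ),
        χ (s.headD 0) * pword p s ≤
          pMax p N ^ (υ.length + 1) * (pMin p N)⁻¹ * (χ (ρ.headD 0) * pword p ρ) := by
      intro s hs
      obtain ⟨hsg, hseq⟩ := Finset.mem_filter.mp hs
      obtain ⟨a, u, b, _, _, _, _, _, _, _, hbd⟩ := key s hsg
      rwa [hseq] at hbd
    have hcard : ((Gam p N (ω ++ υ ++ τ)).filter
        (fun s => s.take ω.length ++ s.drop (ω.length + υ.length) = ρ)).card ≤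
          υ.length + 1 := by
      have hinj : Set.InjOn
          (fun s : List ℕ => ((s.drop ω.length).take υ.length).countP (fun x => decide (x ≤ N)))
          ((Gam p N (ω ++ υ ++ τ)).filter
            (fun s => s.take ω.length ++ s.drop (ω.length + υ.length) = ρ)) := by
        intro s₁ hs₁ s₂ hs₂ hcnt
        rw [Finset.mem_coe, Finset.mem_filter] at hs₁ hs₂
        obtain ⟨a₁, u₁, b₁, hdec₁, hla₁, hu₁, hup₁, hmid₁, hfe₁, _, _⟩ := key s₁ hs₁.1
        obtain ⟨a₂, u₂, b₂, hdec₂, hla₂, hu₂, hup₂, hmid₂, hfe₂, _, _⟩ := key s₂ hs₂.1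
        have hab : a₁ ++ b₁ = a₂ ++ b₂ := by rw [← hfe₁, ← hfe₂, hs₁.2, hs₂.2]
        obtain ⟨hae, hbe⟩ := List.append_inj hab (by rw [hla₁, hla₂])
        have hcnt' : u₁.countP (fun x => decide (x ≤ N)) =
            u₂.countP (fun x => decide (x ≤ N)) := by
          simpa [hmid₁, hmid₂] using hcnt
        have he1 := countUp υ u₁ hυmem hu₁ hup₁
        have he2 := countUp υ u₂ hυmem hu₂ hup₂
        rw [hdec₁, hdec₂, hae, hbe, he1, he2, hcnt']
      have hmapsr : ∀ s ∈ (Gam p N (ω ++ υ ++ τ)).filter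
          (fun s => s.take ω.length ++ s.drop (ω.length + υ.length) = ρ),
          ((s.drop ω.length).take υ.length).countP (fun x => decide (x ≤ N)) ∈
            Finset.range (υ.length + 1) := by
        intro s hs
        obtain ⟨a, u, b, _, _, hu, _, hmid, _, _, _⟩ := key s (Finset.mem_filter.mp hs).1
        rw [Finset.mem_range, hmid]
        have hc1 : u.countP (fun x => decide (x ≤ N)) ≤ u.length := List.countP_le_length
        have hc2 : u.length = υ.length := lifts_length hu
        omega
      have := Finset.card_le_card_of_injOn _ hmapsr hinj
      simpa [Finset.card_range] using this
    calc ∑ s ∈ (Gam p N (ω ++ υ ++ τ)).filter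
          (fun s => s.take ω.length ++ s.drop (ω.length + υ.length) = ρ),
          χ (s.headD 0) * pword p s
        ≤ ((Gam p N (ω ++ υ ++ τ)).filter
            (fun s => s.take ω.length ++ s.drop (ω.length + υ.length) = ρ)).card •
            (pMax p N ^ (υ.length + 1) * (pMin p N)⁻¹ * (χ (ρ.headD 0) * pword p ρ)) :=
          Finset.sum_le_card_nsmul _ _ _ hterm
      _ = (((Gam p N (ω ++ υ ++ τ)).filter
            (fun s => s.take ω.length ++ s.drop (ω.length + υ.length) = ρ)).card : ℝ) *
            (pMax p N ^ (υ.length + 1) * (pMin p N)⁻¹ * (χ (ρ.headD 0) * pword p ρ)) :=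
          nsmul_eq_mul _ _
      _ ≤ ((υ.length : ℝ) + 1) *
            (pMax p N ^ (υ.length + 1) * (pMin p N)⁻¹ * (χ (ρ.headD 0) * pword p ρ)) := by
          apply mul_le_mul_of_nonneg_right _
            (mul_nonneg (mul_nonneg (pow_nonneg hpMax_pos.le _)
              (inv_nonneg.mpr hpMin_pos.le)) hFρnn)
          exact_mod_cast hcard
      _ = ((υ.length : ℝ) + 1) * (pMax p N ^ (υ.length + 1) * (pMin p N)⁻¹) *
            (χ (ρ.headD 0) * pword p ρ) := by ring
  -- the contraction-ratio comparison
  have hυτne : υ ++ τ ≠ [] := by simp [hυne]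
  have CS1' : (ω ++ (υ ++ τ)).Chain' (fun a b => 0 ≤ sr a b ∧ sr a b ≤ sMax p sr N) := by
    rw [← List.append_assoc]; exact CS1
  obtain ⟨CSw, CSut, CSj1⟩ := List.isChain_append.mp CS1'
  obtain ⟨CSu, CSt, CSj2⟩ := List.isChain_append.mp CSut
  have hbj1 : 0 ≤ sr (ω.getLastD 0) (υ.headD 0) ∧
      sr (ω.getLastD 0) (υ.headD 0) ≤ sMax p sr N := by
    have := CSj1 _ (Option.mem_def.mpr (getLast?_eq_getLastD' hωne))
      _ (Option.mem_def.mpr (headD_eq_head? hυτne))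
    rwa [headD_append' hυne] at this
  have hbj2 : 0 ≤ sr (υ.getLastD 0) (τ.headD 0) ∧
      sr (υ.getLastD 0) (τ.headD 0) ≤ sMax p sr N :=
    CSj2 _ (Option.mem_def.mpr (getLast?_eq_getLastD' hυne))
      _ (Option.mem_def.mpr (headD_eq_head? hτne))
  have hb0 : sMin p sr N ≤ sr (ω.getLastD 0) (τ.headD 0) := hsMin_le _ _ hi0 hj0 hsw0
  have nnA : 0 ≤ pword sr ω := pword_nonneg'_s16 ω (CSw.imp fun _ _ h => h.1)
  have nnB : 0 ≤ pword sr τ := pword_nonneg'_s16 τ (CSt.imp fun _ _ h => h.1)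
  have nnV : 0 ≤ pword sr υ := pword_nonneg'_s16 υ (CSu.imp fun _ _ h => h.1)
  have hV : pword sr υ ≤ sMax p sr N ^ (υ.length - 1) := pword_le_pow hsMax_pos.le υ CSu
  have hS1nn : 0 ≤ sword sr (ω ++ υ ++ τ) := by
    rw [sword_eq_pword]; exact pword_nonneg'_s16 _ (CS1.imp fun _ _ h => h.1)
  have hS2nn : 0 ≤ sword sr (ω ++ τ) := by
    rw [sword_eq_pword]; exact pword_nonneg'_s16 _ (CS2.imp fun _ _ h => h.1)
  have hsw : sword sr (ω ++ υ ++ τ) ≤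
      (sMax p sr N ^ (υ.length + 1) * (sMin p sr N)⁻¹) * sword sr (ω ++ τ) := by
    rw [sword_eq_pword, sword_eq_pword,
      show ω ++ υ ++ τ = ω ++ (υ ++ τ) from List.append_assoc _ _ _,
      pword_append' ω hωne (υ ++ τ) hυτne, pword_append' υ hυne τ hτne,
      pword_append' ω hωne τ hτne, headD_append' hυne]
    have step1 : pword sr ω * (sr (ω.getLastD 0) (υ.headD 0) *
        (pword sr υ * (sr (υ.getLastD 0) (τ.headD 0) * pword sr τ))) ≤
        pword sr ω * (sMax p sr N * (sMax p sr N ^ (υ.length - 1) *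
          (sMax p sr N * pword sr τ))) := by
      apply mul_le_mul_of_nonneg_left _ nnA
      apply mul_le_mul hbj1.2 _ _ hsMax_pos.le
      · exact mul_le_mul hV (mul_le_mul_of_nonneg_right hbj2.2 nnB)
          (mul_nonneg hbj2.1 nnB) (pow_nonneg hsMax_pos.le _)
      · exact mul_nonneg nnV (mul_nonneg hbj2.1 nnB)
    have hcomb : pword sr ω * (sMax p sr N * (sMax p sr N ^ (υ.length - 1) *
        (sMax p sr N * pword sr τ))) =
        sMax p sr N ^ (υ.length + 1) * (pword sr ω * pword sr τ) := by
      have h2 : (υ.length - 1) + 2 = υ.length + 1 := by omega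
      calc pword sr ω * (sMax p sr N * (sMax p sr N ^ (υ.length - 1) *
            (sMax p sr N * pword sr τ)))
          = sMax p sr N ^ (υ.length - 1) * sMax p sr N ^ 2 * (pword sr ω * pword sr τ) := by
            ring
        _ = sMax p sr N ^ ((υ.length - 1) + 2) * (pword sr ω * pword sr τ) := by rw [pow_add]
        _ = _ := by rw [h2]
    have hABle : pword sr ω * pword sr τ ≤
        (sMin p sr N)⁻¹ * (pword sr ω * (sr (ω.getLastD 0) (τ.headD 0) * pword sr τ)) := by
      rw [← div_eq_inv_mul, le_div_iff₀ hsMin_pos]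
      calc pword sr ω * pword sr τ * sMin p sr N
          ≤ pword sr ω * pword sr τ * sr (ω.getLastD 0) (τ.headD 0) :=
            mul_le_mul_of_nonneg_left hb0 (mul_nonneg nnA nnB)
        _ = pword sr ω * (sr (ω.getLastD 0) (τ.headD 0) * pword sr τ) := by ring
    calc pword sr ω * (sr (ω.getLastD 0) (υ.headD 0) *
          (pword sr υ * (sr (υ.getLastD 0) (τ.headD 0) * pword sr τ)))
        ≤ sMax p sr N ^ (υ.length + 1) * (pword sr ω * pword sr τ) := by
          rw [← hcomb]; exact step1
      _ ≤ sMax p sr N ^ (υ.length + 1) * ((sMin p sr N)⁻¹ *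
            (pword sr ω * (sr (ω.getLastD 0) (τ.headD 0) * pword sr τ))) :=
          mul_le_mul_of_nonneg_left hABle (pow_nonneg hsMax_pos.le _)
      _ = _ := by ring
  have hswr : sword sr (ω ++ υ ++ τ) ^ r ≤
      (sMax p sr N ^ r) ^ (υ.length + 1) * ((sMin p sr N ^ r)⁻¹ * sword sr (ω ++ τ) ^ r) := by
    have h1 := Real.rpow_le_rpow hS1nn hsw hr.le
    have hKnn : (0 : ℝ) ≤ sMax p sr N ^ (υ.length + 1) * (sMin p sr N)⁻¹ :=
      mul_nonneg (pow_nonneg hsMax_pos.le _) (inv_nonneg.mpr hsMin_pos.le)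
    rw [Real.mul_rpow hKnn hS2nn,
      Real.mul_rpow (pow_nonneg hsMax_pos.le _) (inv_nonneg.mpr hsMin_pos.le),
      Real.inv_rpow hsMin_pos.le] at h1
    have hpowc : (sMax p sr N ^ (υ.length + 1) : ℝ) ^ r =
        (sMax p sr N ^ r) ^ (υ.length + 1) := by
      rw [← Real.rpow_natCast (sMax p sr N) (υ.length + 1),
        ← Real.rpow_natCast (sMax p sr N ^ r) (υ.length + 1),
        ← Real.rpow_mul hsMax_pos.le, ← Real.rpow_mul hsMax_pos.le, mul_comm]
    rw [hpowc] at h1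
    calc sword sr (ω ++ υ ++ τ) ^ r ≤ _ := h1
      _ = _ := by ring
  -- assemble
  unfold Er
  rw [if_neg hw1ne, if_neg hw2ne]
  have hRHS1nn : 0 ≤ ((υ.length : ℝ) + 1) *
      (pMax p N ^ (υ.length + 1) * (pMin p N)⁻¹) * muJ p χ N (ω ++ τ) :=
    mul_nonneg (mul_nonneg (by positivity)
      (mul_nonneg (pow_nonneg hpMax_pos.le _) (inv_nonneg.mpr hpMin_pos.le))) hμ2nn
  have hfinal := mul_le_mul hμ hswr (Real.rpow_nonneg hS1nn r) hRHS1nn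
  calc muJ p χ N (ω ++ υ ++ τ) * sword sr (ω ++ υ ++ τ) ^ r ≤ _ := hfinal
    _ = (↑υ.length + 1) * (pMax p N * sMax p sr N ^ r) ^ (υ.length + 1) *
        (pMin p N * sMin p sr N ^ r)⁻¹ * (muJ p χ N (ω ++ τ) * sword sr (ω ++ τ) ^ r) := by
      rw [mul_pow, mul_inv]
      ring

end MTM

end
end
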